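/- arXiv:2106.12786 — 9 statements merged into one kernel-verified Lean document; each statement's English description precedes it below -/
import Mathlib

section
/- For every integer m ≥ 0, the linear map T : P_m(ℝ³;ℝ³) → P_m(ℝ³;ℝ³) defined by T(q)(x) := div( sym( x q(x)ᵀ ) ) is a bijection. In particular, if q ∈ P_m(ℝ³;ℝ³) satisfies div( sym( x q(x)ᵀ ) ) = 0 for all x ∈ ℝ³, then q = 0. -/
open Matrix

noncomputable section

abbrev V3 : Type := Fin 3 → ℝ
abbrev M3 : Type := Matrix (Fin 3) (Fin 3) ℝ

/-- The Levi-Civita symbol `ε i j k` on `Fin 3`. -/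
def eps (i j k : Fin 3) : ℝ :=
  ((((j : ℤ) - (i : ℤ)) * ((k : ℤ) - (j : ℤ)) * ((k : ℤ) - (i : ℤ)) : ℤ) : ℝ) / 2

/-- Partial derivative `∂ᵢ f`. -/
def pd (i : Fin 3) (f : V3 → ℝ) : V3 → ℝ :=
  fun x => fderiv ℝ f x (Pi.single i 1)

/-- Cross product of vectors in `ℝ³`. -/
def vcross (a b : V3) : V3 := fun i => ∑ k, ∑ l, eps i k l * a k * b l

/-- Symmetric part of a matrix, `sym B = (B + Bᵀ)/2`. -/
def symMat (B : M3) : M3 := (2:ℝ)⁻¹ • (B + Bᵀ)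

/-- `(∇v)_{ij} = ∂ᵢ v_j`. -/
def gradv (v : V3 → V3) : V3 → M3 :=
  fun x => Matrix.of fun i j => pd i (fun y => v y j) x

/-- Symmetric gradient (deformation) `def v = (∇v + (∇v)ᵀ)/2`. -/
def defv (v : V3 → V3) : V3 → M3 := fun x => symMat (gradv v x)

/-- Column-wise curl `(∇×A)_{ij} = Σ_{s,t} ε_{ist} ∂_s A_{tj}`. -/
def colCurl (A : V3 → M3) : V3 → M3 :=
  fun x => Matrix.of fun i j => ∑ s, ∑ t, eps i s t * pd s (fun y => A y t j) x

/-- Row-wise curl `(A×∇)_{ij} = Σ_{k,l} ε_{jkl} ∂_l A_{ik}`. -/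
def rowCurl (A : V3 → M3) : V3 → M3 :=
  fun x => Matrix.of fun i j => ∑ k, ∑ l, eps j k l * pd l (fun y => A y i k) x

/-- Incompatibility operator `inc A = ∇×(A×∇)`. -/
def incOp (A : V3 → M3) : V3 → M3 := colCurl (rowCurl A)

/-- Row-wise divergence `(div A)_i = Σ_j ∂_j A_{ij}`. -/
def divRow (A : V3 → M3) : V3 → V3 :=
  fun x i => ∑ j, pd j (fun y => A y i j) x

/-- Curl of a vector field. -/
def curlVec (w : V3 → V3) : V3 → V3 :=
  fun x i => ∑ s, ∑ t, eps i s t * pd s (fun y => w y t) x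

/-- `(b×A)_{ij} = Σ_{k,l} ε_{ikl} b_k A_{lj}`. -/
def bCrossA (b : V3) (A : M3) : M3 :=
  Matrix.of fun i j => ∑ k, ∑ l, eps i k l * b k * A l j

/-- `(A×b)_{ij} = Σ_{k,l} ε_{jkl} A_{ik} b_l`. -/
def aCrossB (A : M3) (b : V3) : M3 :=
  Matrix.of fun i j => ∑ k, ∑ l, eps j k l * A i k * b l

/-- `f : ℝ³ → ℝ` is a polynomial map of total degree at most `m` (`m : ℤ`, so
`m < 0` forces `f = 0` since the zero polynomial has empty support). -/
def PolyDeg (m : ℤ) (f : V3 → ℝ) : Prop :=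
  ∃ p : MvPolynomial (Fin 3) ℝ,
    (∀ d ∈ p.support, ((∑ i, d i : ℕ) : ℤ) ≤ m) ∧ f = fun x => MvPolynomial.eval x p

/-- `P_m(ℝ³;ℝ³)`. -/
def PolyVec (m : ℤ) (v : V3 → V3) : Prop := ∀ i, PolyDeg m fun x => v x i

/-- `P_m(ℝ³;𝕄)`. -/
def PolyMat (m : ℤ) (A : V3 → M3) : Prop := ∀ i j, PolyDeg m fun x => A x i j

/-- `P_m(ℝ³;𝕊)`: polynomial symmetric-matrix-valued maps of degree at most `m`. -/
def PolySym (m : ℤ) (A : V3 → M3) : Prop := PolyMat m A ∧ ∀ x, (A x)ᵀ = A x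

/-- `T(q)(x) = div( sym( x q(x)ᵀ ) )`. -/
def T0 (q : V3 → V3) : V3 → V3 :=
  divRow fun y => symMat (Matrix.vecMulVec y (q y))


namespace Stmt0Aux


open MvPolynomial

abbrev MvP := MvPolynomial (Fin 3) ℝ

/-- The candidate derivative of `fun y => eval y p` at `x`. -/
def evalD (p : MvP) (x : V3) : V3 →L[ℝ] ℝ :=
  ∑ j, MvPolynomial.eval x (pderiv j p) • (ContinuousLinearMap.proj j : V3 →L[ℝ] ℝ)

lemma hasFDerivAt_eval (p : MvP) (x : V3) :
    HasFDerivAt (fun y : V3 => MvPolynomial.eval y p) (evalD p x) x := by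
  induction p using MvPolynomial.induction_on with
  | C a =>
      have h1 : evalD (C a) x = 0 := by simp [evalD]
      have h2 : (fun y : V3 => MvPolynomial.eval y (C a : MvP)) = fun _ => a := by
        funext y; simp
      rw [h1, h2]
      exact hasFDerivAt_const a x
  | add p q hp hq =>
      have h1 : evalD (p + q) x = evalD p x + evalD q x := by
        simp [evalD, add_smul, Finset.sum_add_distrib]
      have h2 : (fun y : V3 => MvPolynomial.eval y (p + q)) =
          fun y => MvPolynomial.eval y p + MvPolynomial.eval y q := by
        funext y; simp
      rw [h1, h2]
      exact hp.add hq
  | mul_X p i hp =>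
      have h2 : HasFDerivAt (fun y : V3 => y i)
          (ContinuousLinearMap.proj i : V3 →L[ℝ] ℝ) x :=
        hasFDerivAt_apply i x
      have := hp.mul h2
      have hfun : (fun y : V3 => MvPolynomial.eval y (p * X i)) =
          fun y => MvPolynomial.eval y p * y i := by
        funext y; simp
      rw [hfun]
      refine HasFDerivAt.congr_fderiv this ?_
      symm
      apply ContinuousLinearMap.ext; intro v
      simp only [evalD, ContinuousLinearMap.coe_sum', Finset.sum_apply,
        ContinuousLinearMap.coe_smul', Pi.smul_apply, ContinuousLinearMap.proj_apply,
        smul_eq_mul, ContinuousLinearMap.add_apply]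
      have key : ∀ j : Fin 3,
          ((eval x) ((pderiv j) p) * x i + (eval x) p * (eval x) (if i = j then (1:MvP) else 0)) * v j
            = (eval x) ((pderiv j) p) * x i * v j + (if i = j then (eval x) p * v j else 0) := by
        intro j; by_cases h : i = j <;> simp [h] <;> ring
      simp only [pderiv_mul, pderiv_X, map_add, eval_mul, eval_X, Pi.single_apply]
      rw [Finset.sum_congr rfl fun j _ => key j, Finset.sum_add_distrib, add_comm]
      congr 1
      · simp [Finset.sum_ite_eq]
      · rw [Finset.mul_sum]; exact Finset.sum_congr rfl fun j _ => by ring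

lemma pd_eval (j : Fin 3) (p : MvP) (x : V3) :
    fderiv ℝ (fun y : V3 => MvPolynomial.eval y p) x (Pi.single j 1) =
      MvPolynomial.eval x (pderiv j p) := by
  rw [(hasFDerivAt_eval p x).fderiv]
  simp [evalD, Pi.single_apply, mul_ite, Finset.sum_ite_eq']

lemma coeff_pderiv (j : Fin 3) (p : MvP) (e : Fin 3 →₀ ℕ) :
    coeff e (pderiv j p) = ((e j : ℝ) + 1) * coeff (e + Finsupp.single j 1) p := by
  induction p using MvPolynomial.induction_on' with
  | add p q hp hq => simp [hp, hq, mul_add]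
  | monomial s a =>
      rw [pderiv_monomial, coeff_monomial, coeff_monomial]
      by_cases h : s = e + Finsupp.single j 1
      · subst h
        have h1 : e + Finsupp.single j 1 - Finsupp.single j 1 = e := by
          ext k; simp [Finsupp.single_apply]
        have h2 : ((e + Finsupp.single j 1 : Fin 3 →₀ ℕ)) j = e j + 1 := by
          simp [Finsupp.single_apply]
        rw [if_pos h1, if_pos rfl, h2]
        push_cast; ring
      · rw [if_neg h, mul_zero]
        by_cases h2 : s - Finsupp.single j 1 = e
        · rw [if_pos h2]
          by_cases h3 : s j = 0
          · simp [h3]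
          · exfalso; apply h
            ext k
            have hk := DFunLike.congr_fun h2 k
            simp only [Finsupp.tsub_apply, Finsupp.coe_add, Pi.add_apply,
              Finsupp.single_apply] at hk ⊢
            by_cases hjk : j = k
            · subst hjk; simp at hk ⊢; omega
            · simp [hjk] at hk ⊢; omega
        · rw [if_neg h2]

lemma pderiv_comm (i j : Fin 3) (p : MvP) :
    pderiv i (pderiv j p) = pderiv j (pderiv i p) := by
  apply MvPolynomial.ext
  intro e
  rw [coeff_pderiv, coeff_pderiv, coeff_pderiv, coeff_pderiv]
  have hadd : e + Finsupp.single i 1 + Finsupp.single j 1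
      = e + Finsupp.single j 1 + Finsupp.single i 1 := by
    rw [add_right_comm]
  rw [hadd]
  by_cases h : i = j
  · subst h; ring
  · have h1 : ((e + Finsupp.single i 1 : Fin 3 →₀ ℕ)) j = e j := by
      simp [Finsupp.single_apply, h]
    have h2 : ((e + Finsupp.single j 1 : Fin 3 →₀ ℕ)) i = e i := by
      have h' : ¬ (j = i) := fun hh => h hh.symm
      simp [Finsupp.single_apply, h']
    rw [h1, h2]; ring

/-- Euler operator. -/
def Ep (p : MvP) : MvP := ∑ j, X j * pderiv j p

/-- Divergence. -/
def Dp (q : Fin 3 → MvP) : MvP := ∑ j, pderiv j (q j)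

lemma single_sub_add {d : Fin 3 →₀ ℕ} {j : Fin 3} (h : d j ≠ 0) :
    d - Finsupp.single j 1 + Finsupp.single j 1 = d := by
  ext k
  simp only [Finsupp.coe_add, Pi.add_apply, Finsupp.tsub_apply, Finsupp.single_apply]
  by_cases hk : j = k
  · subst hk; simp; omega
  · simp [hk]

lemma coeff_Ep (p : MvP) (d : Fin 3 →₀ ℕ) :
    coeff d (Ep p) = (∑ i, (d i : ℝ)) * coeff d p := by
  classical
  rw [Ep, MvPolynomial.coeff_sum, Finset.sum_mul]
  refine Finset.sum_congr rfl fun j _ => ?_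
  rw [coeff_X_mul']
  by_cases h : j ∈ d.support
  · have hj : d j ≠ 0 := Finsupp.mem_support_iff.mp h
    rw [if_pos h, coeff_pderiv, single_sub_add hj]
    have : ((d - Finsupp.single j 1 : Fin 3 →₀ ℕ)) j = d j - 1 := by
      simp [Finsupp.single_apply]
    rw [this]
    have : ((d j - 1 : ℕ) : ℝ) + 1 = (d j : ℝ) := by
      have : 1 ≤ d j := Nat.one_le_iff_ne_zero.mpr hj
      push_cast [Nat.cast_sub this]; ring
    rw [this]
  · have hj : d j = 0 := by simpa using h
    rw [if_neg h, hj]; simp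

lemma euler_zero {p : MvP} (h : (4:ℝ) • p + Ep p = 0) : p = 0 := by
  apply MvPolynomial.ext
  intro d
  have hd := congrArg (coeff d) h
  rw [coeff_add, coeff_smul, coeff_Ep, coeff_zero, smul_eq_mul] at hd
  have hfac : (4 + ∑ i, (d i : ℝ)) * coeff d p = 0 := by ring_nf; ring_nf at hd; linarith
  have hpos : (0:ℝ) < 4 + ∑ i, (d i : ℝ) := by positivity
  rw [coeff_zero]
  rcases mul_eq_zero.mp hfac with h' | h'
  · exact absurd h' (ne_of_gt hpos)
  · exact h'

lemma sumB (r : MvP) : ∑ i, pderiv i (X i * r) = (3:ℕ) • r + Ep r := by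
  simp only [pderiv_mul, pderiv_X_self, one_mul]
  rw [Finset.sum_add_distrib, Finset.sum_const, Finset.card_univ]
  simp [Ep]

lemma sumA (q : Fin 3 → MvP) :
    ∑ i, pderiv i (Ep (q i)) = Dp q + Ep (Dp q) := by
  classical
  have step : ∀ i, pderiv i (Ep (q i))
      = pderiv i (q i) + ∑ j, X j * pderiv j (pderiv i (q i)) := by
    intro i
    rw [Ep, map_sum]
    simp only [pderiv_mul, pderiv_X, Pi.single_apply]
    rw [Finset.sum_add_distrib]
    refine congrArg₂ (· + ·) ?_ ?_
    · simp [ite_mul, Finset.sum_ite_eq']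
    · exact Finset.sum_congr rfl fun j _ => by rw [pderiv_comm i j]
  rw [Finset.sum_congr rfl fun i _ => step i, Finset.sum_add_distrib]
  refine congrArg₂ (· + ·) rfl ?_
  rw [Finset.sum_comm, Ep, Dp]
  exact Finset.sum_congr rfl fun j _ => by rw [map_sum, Finset.mul_sum]

lemma keyIdentity (q : Fin 3 → MvP) :
    ∑ i, pderiv i ((4:ℝ) • q i + Ep (q i) + X i * Dp q)
      = (8:ℝ) • Dp q + (2:ℝ) • Ep (Dp q) := by
  simp only [map_add, Derivation.map_smul]
  rw [Finset.sum_add_distrib, Finset.sum_add_distrib, sumA, sumB, ← Finset.smul_sum]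
  have hD : ∑ i, pderiv i (q i) = Dp q := rfl
  rw [hD]
  module


/-- The polynomial-level operator corresponding to `T0`. -/
def Tp (q : Fin 3 → MvP) (i : Fin 3) : MvP :=
  (2:ℝ)⁻¹ • ((4:ℝ) • q i + Ep (q i) + X i * Dp q)

lemma two_Tp (q : Fin 3 → MvP) (i : Fin 3) :
    (2:ℝ) • Tp q i = (4:ℝ) • q i + Ep (q i) + X i * Dp q := by
  rw [Tp, smul_smul]; norm_num

lemma Tp_ker (q : Fin 3 → MvP) (h : ∀ i, Tp q i = 0) : ∀ i, q i = 0 := by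
  have hZ : ∀ i, (4:ℝ) • q i + Ep (q i) + X i * Dp q = 0 := by
    intro i; rw [← two_Tp, h i, smul_zero]
  have hsum : (8:ℝ) • Dp q + (2:ℝ) • Ep (Dp q) = 0 := by
    rw [← keyIdentity]
    refine Finset.sum_eq_zero fun i _ => ?_
    rw [hZ i, map_zero]
  have hD4 : (4:ℝ) • Dp q + Ep (Dp q) = 0 := by
    have h2 := congrArg (fun z => (2:ℝ)⁻¹ • z) hsum
    simpa [smul_add, smul_smul, show (2:ℝ)⁻¹ * 8 = 4 by norm_num,
      show (2:ℝ)⁻¹ * 2 = 1 by norm_num] using h2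
  have hD : Dp q = 0 := euler_zero hD4
  intro i
  apply euler_zero
  have hZi := hZ i
  rw [hD, mul_zero, add_zero] at hZi
  exact hZi

lemma Tp_add (q q' : Fin 3 → MvP) (i : Fin 3) :
    Tp (q + q') i = Tp q i + Tp q' i := by
  simp only [Tp, Ep, Dp, Pi.add_apply, map_add, Finset.sum_add_distrib, mul_add]
  module

lemma Tp_sub (q q' : Fin 3 → MvP) (i : Fin 3) :
    Tp (q - q') i = Tp q i - Tp q' i := by
  simp only [Tp, Ep, Dp, Pi.sub_apply, map_sub, Finset.sum_sub_distrib, mul_sub]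
  module

lemma Tp_smul (c : ℝ) (q : Fin 3 → MvP) (i : Fin 3) :
    Tp (c • q) i = c • Tp q i := by
  simp only [Tp, Ep, Dp, Pi.smul_apply, Derivation.map_smul, mul_smul_comm,
    ← Finset.smul_sum]
  module

/-- `Tp` as a linear map. -/
def TpL : (Fin 3 → MvP) →ₗ[ℝ] (Fin 3 → MvP) where
  toFun q := fun i => Tp q i
  map_add' q q' := funext fun i => Tp_add q q' i
  map_smul' c q := funext fun i => Tp_smul c q i

lemma totalDegree_Ep_le (p : MvP) : (Ep p).totalDegree ≤ p.totalDegree := by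
  apply totalDegree_le_of_support_subset
  intro d hd
  rw [mem_support_iff] at hd ⊢
  intro h0; apply hd; rw [coeff_Ep, h0, mul_zero]

lemma totalDegree_X_mul_pderiv_le (i j : Fin 3) (s : MvP) :
    (X i * pderiv j s).totalDegree ≤ s.totalDegree := by
  classical
  rw [MvPolynomial.totalDegree]
  apply Finset.sup_le
  intro d hd
  have h1 := mem_support_iff.mp hd
  rw [coeff_X_mul'] at h1
  by_cases hi : i ∈ d.support
  · rw [if_pos hi, coeff_pderiv] at h1
    set e : Fin 3 →₀ ℕ := d - Finsupp.single i 1 + Finsupp.single j 1 with he_def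
    have he : coeff e s ≠ 0 := fun h => h1 (by rw [h, mul_zero])
    have hle : (e.sum fun _ n => n) ≤ s.totalDegree :=
      le_totalDegree (mem_support_iff.mpr he)
    have hsum : (d.sum fun _ n => n) = e.sum fun _ n => n := by
      rw [Finsupp.sum_fintype _ _ (fun _ => rfl), Finsupp.sum_fintype _ _ (fun _ => rfl)]
      have hi' : d i ≠ 0 := Finsupp.mem_support_iff.mp hi
      have hval : ∀ k, e k = d k - (if i = k then 1 else 0) + (if j = k then 1 else 0) := by
        intro k
        simp [he_def, Finsupp.single_apply]
      rw [Fin.sum_univ_three, Fin.sum_univ_three, hval 0, hval 1, hval 2]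
      fin_cases i <;> fin_cases j <;> simp_all <;> omega
    rw [hsum]; exact hle
  · rw [if_neg hi] at h1; exact absurd rfl h1

lemma totalDegree_Tp_le {m : ℕ} (q : Fin 3 → MvP) (h : ∀ i, (q i).totalDegree ≤ m)
    (i : Fin 3) : (Tp q i).totalDegree ≤ m := by
  refine (totalDegree_smul_le _ _).trans ?_
  refine (totalDegree_add _ _).trans (max_le ?_ ?_)
  · refine (totalDegree_add _ _).trans (max_le ?_ ?_)
    · exact (totalDegree_smul_le _ _).trans (h i)
    · exact (totalDegree_Ep_le _).trans (h i)
  · rw [Dp, Finset.mul_sum]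
    refine (totalDegree_finset_sum _ _).trans ?_
    exact Finset.sup_le fun j _ => (totalDegree_X_mul_pderiv_le i j (q j)).trans (h j)

lemma finsuppSum_eq (d : Fin 3 →₀ ℕ) : (d.sum fun _ e => e) = ∑ i, d i :=
  Finsupp.sum_fintype _ _ (fun _ => rfl)

/-- Correspondence between `T0` and `Tp`. -/
lemma T0_eval (p : Fin 3 → MvP) (x : V3) (i : Fin 3) :
    T0 (fun y k => MvPolynomial.eval y (p k)) x i = MvPolynomial.eval x (Tp p i) := by
  have hfun : ∀ j : Fin 3,
      (fun y : V3 => symMat (Matrix.vecMulVec y (fun k => MvPolynomial.eval y (p k))) i j)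
        = fun y : V3 => MvPolynomial.eval y
            ((2:ℝ)⁻¹ • (X i * p j + X j * p i) : MvP) := by
    intro j; funext y
    simp only [symMat, Matrix.smul_apply, Matrix.add_apply, Matrix.transpose_apply,
      Matrix.vecMulVec_apply, smul_eq_mul, smul_eval, eval_add, eval_mul, eval_X]
    try ring
  have step1 : T0 (fun y k => MvPolynomial.eval y (p k)) x i
      = ∑ j, MvPolynomial.eval x (pderiv j ((2:ℝ)⁻¹ • (X i * p j + X j * p i) : MvP)) := by
    have hT : T0 (fun y k => MvPolynomial.eval y (p k)) x i
        = ∑ j, pd j (fun y => symMat (Matrix.vecMulVec y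
            (fun k => MvPolynomial.eval y (p k))) i j) x := rfl
    rw [hT]
    refine Finset.sum_congr rfl fun j _ => ?_
    have hpd : ∀ f : V3 → ℝ, pd j f x = fderiv ℝ f x (Pi.single j 1) := fun _ => rfl
    rw [hpd, hfun j]
    exact pd_eval j _ x
  rw [step1, ← map_sum]
  congr 1
  have expand : ∀ j : Fin 3, pderiv j ((2:ℝ)⁻¹ • (X i * p j + X j * p i) : MvP)
      = (2:ℝ)⁻¹ • (pderiv j (X i * p j) + pderiv j (X j * p i)) := by
    intro j; rw [Derivation.map_smul, map_add]
  rw [Finset.sum_congr rfl fun j _ => expand j, ← Finset.smul_sum, Finset.sum_add_distrib]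
  have h1 : ∑ j, pderiv j (X i * p j) = p i + X i * Dp p := by
    simp only [pderiv_mul, pderiv_X, Pi.single_apply]
    rw [Finset.sum_add_distrib]
    congr 1
    · simp [ite_mul, Finset.sum_ite_eq']
    · rw [Dp, Finset.mul_sum]
  have h2 : ∑ j, pderiv j (X j * p i) = (3:ℕ) • p i + Ep (p i) := sumB (p i)
  rw [h1, h2, Tp]
  congr 1
  module

/-- Extract a polynomial representation from `PolyVec`. -/
lemma exists_rep {m : ℕ} (q : V3 → V3) (h : PolyVec m q) :
    ∃ p : Fin 3 → MvP, (∀ i, (p i).totalDegree ≤ m) ∧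
      ∀ x i, q x i = MvPolynomial.eval x (p i) := by
  choose p h1 h2 using h
  refine ⟨p, fun i => ?_, fun x i => by rw [congrFun (h2 i) x]⟩
  rw [MvPolynomial.totalDegree]
  apply Finset.sup_le
  intro d hd
  have := h1 i d hd
  rw [finsuppSum_eq]
  exact_mod_cast this

lemma polyVec_of {m : ℕ} (p : Fin 3 → MvP) (h : ∀ i, (p i).totalDegree ≤ m) :
    PolyVec m (fun x i => MvPolynomial.eval x (p i)) := by
  intro i
  refine ⟨p i, fun d hd => ?_, rfl⟩
  have := (le_totalDegree hd).trans (h i)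
  rw [finsuppSum_eq] at this
  exact_mod_cast this

/-- The restricted space. -/
abbrev W (m : ℕ) : Type := Fin 3 → ↥(restrictTotalDegree (Fin 3) ℝ m)

/-- `Tp` restricted to `W m`. -/
def TW (m : ℕ) : W m →ₗ[ℝ] W m where
  toFun q := fun i => ⟨Tp (fun k => (q k : MvP)) i, by
    rw [mem_restrictTotalDegree]
    exact totalDegree_Tp_le _ (fun k => (mem_restrictTotalDegree _ _ _).mp (q k).2) i⟩
  map_add' q q' := by
    funext i
    apply Subtype.ext
    have h : (fun k => ((q + q') k : MvP)) = (fun k => (q k : MvP)) + fun k => (q' k : MvP) :=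
      funext fun k => rfl
    simp only [Pi.add_apply, Submodule.coe_add]
    exact Tp_add (fun k => (q k : MvP)) (fun k => (q' k : MvP)) i
  map_smul' c q := by
    funext i
    apply Subtype.ext
    have h : (fun k => ((c • q) k : MvP)) = c • fun k => (q k : MvP) :=
      funext fun k => rfl
    simp only [Pi.smul_apply, SetLike.val_smul, RingHom.id_apply]
    exact Tp_smul c (fun k => (q k : MvP)) i

lemma TW_injective (m : ℕ) : Function.Injective (TW m) := by
  intro a b hab
  have hfun : ∀ i, Tp (fun k => (a k : MvP)) i = Tp (fun k => (b k : MvP)) i := by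
    intro i
    exact Subtype.ext_iff.mp (congrFun hab i)
  have hsub : ∀ i, Tp ((fun k => (a k : MvP)) - fun k => (b k : MvP)) i = 0 := by
    intro i
    rw [Tp_sub, hfun i, sub_self]
  have hz := Tp_ker _ hsub
  funext i
  have hi := hz i
  rw [Pi.sub_apply] at hi
  exact Subtype.ext (sub_eq_zero.mp hi)

lemma TW_surjective (m : ℕ) : Function.Surjective (TW m) :=
  LinearMap.injective_iff_surjective.mp (TW_injective m)

end Stmt0Aux

open Stmt0Aux MvPolynomial in
/-- for every `m ≥ 0`, the map `q ↦ div(sym(x qᵀ))` is a bijection of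
`P_m(ℝ³;ℝ³)` onto itself; in particular its kernel in `P_m(ℝ³;ℝ³)` is trivial. -/
theorem stmt_0 (m : ℕ) :
    Set.BijOn T0 {q : V3 → V3 | PolyVec m q} {q : V3 → V3 | PolyVec m q} ∧
    ∀ q : V3 → V3, PolyVec m q → (∀ x, T0 q x = 0) → q = 0 := by
  have repT0 : ∀ q : V3 → V3, ∀ p : Fin 3 → MvP,
      (∀ x i, q x i = MvPolynomial.eval x (p i)) →
      ∀ x i, T0 q x i = MvPolynomial.eval x (Tp p i) := by
    intro q p hp x i
    have hq : q = fun y k => MvPolynomial.eval y (p k) :=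
      funext fun y => funext fun k => hp y k
    rw [hq, T0_eval]
  have hker : ∀ q : V3 → V3, PolyVec m q → (∀ x, T0 q x = 0) → q = 0 := by
    intro q hq hz
    obtain ⟨p, hdeg, hrep⟩ := exists_rep q hq
    have hTp : ∀ i, Tp p i = 0 := by
      intro i
      apply MvPolynomial.funext
      intro x
      rw [← repT0 q p hrep x i, map_zero]
      exact congrFun (hz x) i
    have hp0 := Tp_ker p hTp
    funext x
    funext i
    rw [hrep x i, hp0 i, map_zero]
    rfl
  refine ⟨⟨?_, ?_, ?_⟩, hker⟩
  · -- MapsTo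
    intro q hq
    obtain ⟨p, hdeg, hrep⟩ := exists_rep q hq
    have : T0 q = fun x i => MvPolynomial.eval x (Tp p i) :=
      funext fun x => funext fun i => repT0 q p hrep x i
    rw [Set.mem_setOf_eq, this]
    exact polyVec_of _ (totalDegree_Tp_le p hdeg)
  · -- InjOn
    intro q1 hq1 q2 hq2 heq
    obtain ⟨p1, hdeg1, hrep1⟩ := exists_rep q1 hq1
    obtain ⟨p2, hdeg2, hrep2⟩ := exists_rep q2 hq2
    have hTp : ∀ i, Tp p1 i = Tp p2 i := by
      intro i
      apply MvPolynomial.funext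
      intro x
      rw [← repT0 q1 p1 hrep1 x i, ← repT0 q2 p2 hrep2 x i, heq]
    have hsub : ∀ i, Tp (p1 - p2) i = 0 := by
      intro i
      have : TpL (p1 - p2) = TpL p1 - TpL p2 := map_sub _ _ _
      have h' := congrFun this i
      show TpL (p1 - p2) i = 0
      rw [h']
      show Tp p1 i - Tp p2 i = 0
      rw [hTp i, sub_self]
    have hp := Tp_ker _ hsub
    funext x
    funext i
    have : p1 i - p2 i = 0 := hp i
    rw [hrep1 x i, hrep2 x i, sub_eq_zero.mp this]
  · -- SurjOn
    intro q' hq'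
    obtain ⟨p', hdeg', hrep'⟩ := exists_rep q' hq'
    set b : W m := fun i => ⟨p' i, (mem_restrictTotalDegree _ _ _).mpr (hdeg' i)⟩ with hb
    obtain ⟨a, ha⟩ := TW_surjective m b
    refine ⟨fun x i => MvPolynomial.eval x ((a i : MvP)), ?_, ?_⟩
    · exact polyVec_of _ (fun i => (mem_restrictTotalDegree _ _ _).mp (a i).2)
    · funext x
      funext i
      have h1 : Tp (fun k => (a k : MvP)) i = p' i := by
        have := congrFun ha i
        have := Subtype.ext_iff.mp this
        exact this
      rw [repT0 _ (fun k => (a k : MvP)) (fun _ _ => rfl) x i, h1, ← hrep' x i]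
end
end

section
/- The Koszul elasticity sequence is a complex; namely: (i) for every vector field v : ℝ³ → ℝ³ and every x ∈ ℝ³, x×( sym( v(x) xᵀ ) ×x ) = 0; (ii) for every matrix field τ : ℝ³ → ℝ^{3×3} and every x ∈ ℝ³, ( x×(τ(x)×x) )·x = 0; (iii) for every continuously differentiable symmetric matrix field τ : ℝ³ → 𝕊, the vector field w(x) := τ(x)·x satisfies π_RM(w) = 0. -/
open Matrix

noncomputable section

/-- The rigid-motion projection `π_RM(w) : x ↦ w(0) + (1/2)(∇×w)(0) × x`. -/
def piRM (w : V3 → V3) : V3 → V3 :=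
  fun y => w 0 + (2:ℝ)⁻¹ • vcross (curlVec w 0) y

lemma pd_mulVec (τ : V3 → M3) (hC : ∀ i j, ContDiff ℝ 1 fun x => τ x i j)
    (s t : Fin 3) : pd s (fun y => (τ y).mulVec y t) 0 = τ 0 t s := by
  have hf : ∀ j : Fin 3, DifferentiableAt ℝ (fun y : V3 => τ y t j) 0 :=
    fun j => ((hC t j).differentiable one_ne_zero).differentiableAt
  have hg : ∀ j : Fin 3, DifferentiableAt ℝ (fun y : V3 => y j) 0 :=
    fun j => (differentiable_pi.mp differentiable_id j).differentiableAt
  have hmul : ∀ j : Fin 3, DifferentiableAt ℝ (fun y : V3 => τ y t j * y j) 0 :=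
    fun j => (hf j).mul (hg j)
  have h1 : (fun y : V3 => (τ y).mulVec y t) = fun y => ∑ j, τ y t j * y j := by
    funext y
    simp [Matrix.mulVec, dotProduct]
  rw [pd, h1]
  rw [fderiv_fun_sum (fun j _ => hmul j)]
  simp only [ContinuousLinearMap.coe_sum', Finset.sum_apply]
  have h2 : ∀ j : Fin 3,
      fderiv ℝ (fun y : V3 => τ y t j * y j) 0 (Pi.single s 1)
        = τ 0 t j * (Pi.single s (1:ℝ) : V3) j := by
    intro j
    rw [fderiv_fun_mul (hf j) (hg j)]
    have hgj : fderiv ℝ (fun y : V3 => y j) 0 = ContinuousLinearMap.proj j := by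
      exact (ContinuousLinearMap.proj j : V3 →L[ℝ] ℝ).fderiv
    simp [hgj]
  rw [Finset.sum_congr rfl (fun j _ => h2 j)]
  simp [Pi.single_apply, mul_ite, Finset.sum_ite_eq']

set_option maxHeartbeats 1000000 in
/-- the Koszul elasticity sequence is a complex:
(i) `x×(sym(v(x)xᵀ)×x) = 0`; (ii) `(x×(τ(x)×x))·x = 0`;
(iii) for `C¹` symmetric `τ`, `π_RM(τ·x) = 0`. -/
theorem stmt_5 :
    (∀ v : V3 → V3, ∀ x : V3, bCrossA x (aCrossB (symMat (Matrix.vecMulVec (v x) x)) x) = 0) ∧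
    (∀ τ : V3 → M3, ∀ x : V3, (bCrossA x (aCrossB (τ x) x)).mulVec x = 0) ∧
    (∀ τ : V3 → M3, (∀ i j, ContDiff ℝ 1 fun x => τ x i j) → (∀ x, (τ x)ᵀ = τ x) →
      ∀ y, piRM (fun x => (τ x).mulVec x) y = 0) := by
  refine ⟨?_, ?_, ?_⟩
  · intro v x
    funext i j
    fin_cases i <;> fin_cases j <;>
      · simp [bCrossA, aCrossB, symMat, Matrix.vecMulVec, eps, Fin.sum_univ_succ]
        ring
  · intro τ x
    funext i
    fin_cases i <;>
      · simp [bCrossA, aCrossB, Matrix.mulVec, dotProduct, eps, Fin.sum_univ_succ]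
        ring
  · intro τ hC hsym y
    have hw0 : (τ 0).mulVec (0 : V3) = 0 := Matrix.mulVec_zero _
    have hcurl : curlVec (fun x => (τ x).mulVec x) 0 = 0 := by
      funext i
      have hs : ∀ s t : Fin 3, τ 0 t s = τ 0 s t := by
        intro s t
        have := congrArg (fun M : M3 => M s t) (hsym 0)
        simpa [Matrix.transpose_apply] using this
      simp only [curlVec, pd_mulVec τ hC]
      fin_cases i <;>
        · simp [eps, Fin.sum_univ_succ, hs 0 1, hs 0 2, hs 1 2]
          try ring
    funext i
    simp [piRM, hw0, hcurl, vcross]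
end
end

section
/- Let m ≥ 0 be an integer. If τ ∈ P_m(ℝ³;𝕊) satisfies x×(τ(x)×x) = 0 for all x ∈ ℝ³, then there exists v ∈ P_{m-1}(ℝ³;ℝ³) such that τ(x) = sym( v(x) xᵀ ) for all x ∈ ℝ³. -/
open Matrix

noncomputable section

namespace Stmt6Aux

open MvPolynomial

set_option synthInstance.maxHeartbeats 1000000 in
theorem irrprime {R} [CommRing R] [IsDomain R] [UniqueFactorizationMonoid R]
    {p : Polynomial R} (h : Irreducible p) : Prime p := h.prime

abbrev A2 := MvPolynomial (Fin 2) ℝ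

theorem c_ne : (X 0 ^ 2 + X 1 ^ 2 : A2) ≠ 0 := by
  intro hc
  have := congrArg (eval (fun _ => (1:ℝ))) hc
  simp at this

set_option maxHeartbeats 1000000 in
theorem primeQ : Prime (X 0 ^ 2 + X 1 ^ 2 + X 2 ^ 2 : MvPolynomial (Fin 3) ℝ) := by
  have hφ : (finSuccEquiv ℝ 2) (X 0 ^ 2 + X 1 ^ 2 + X 2 ^ 2 : MvPolynomial (Fin 3) ℝ)
      = Polynomial.X ^ 2 + Polynomial.C (X 0 ^ 2 + X 1 ^ 2 : A2) := by
    have h1 : (X 1 : MvPolynomial (Fin 3) ℝ) = X ((0 : Fin 2).succ) := rfl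
    have h2 : (X 2 : MvPolynomial (Fin 3) ℝ) = X ((1 : Fin 2).succ) := rfl
    rw [_root_.map_add, _root_.map_add, _root_.map_pow, _root_.map_pow, _root_.map_pow, finSuccEquiv_X_zero,
      h1, h2, finSuccEquiv_X_succ, finSuccEquiv_X_succ]
    rw [← Polynomial.C_pow, ← Polynomial.C_pow, add_assoc, ← Polynomial.C_add]
  rw [← MulEquiv.prime_iff (finSuccEquiv ℝ 2).toMulEquiv]
  show Prime ((finSuccEquiv ℝ 2) _)
  rw [hφ]
  set c : A2 := X 0 ^ 2 + X 1 ^ 2 with hc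
  have hmonic : (Polynomial.X ^ 2 + Polynomial.C c).Monic := by
    apply Polynomial.monic_X_pow_add_C _ (by norm_num)
  have hdeg : (Polynomial.X ^ 2 + Polynomial.C c).natDegree = 2 := by
    simpa using Polynomial.natDegree_X_pow_add_C (n := 2) (a := c)
  have hirr : Irreducible (Polynomial.X ^ 2 + Polynomial.C c) := by
    rw [hmonic.irreducible_iff_irreducible_map_fraction_map (K := FractionRing A2)]
    set K := FractionRing A2
    by_contra hni
    have hmap : ((Polynomial.X ^ 2 + Polynomial.C c).map (algebraMap A2 K)).Monic :=
      hmonic.map _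
    have hdm : ((Polynomial.X ^ 2 + Polynomial.C c).map (algebraMap A2 K)).natDegree = 2 := by
      rw [hmonic.natDegree_map]; exact hdeg
    obtain ⟨c₁, c₂, h0, h1⟩ := (hmap.not_irreducible_iff_exists_add_mul_eq_coeff hdm).mp hni
    simp only [Polynomial.coeff_map] at h0 h1
    have hc0 : (Polynomial.X ^ 2 + Polynomial.C c).coeff 0 = c := by simp
    have hc1 : (Polynomial.X ^ 2 + Polynomial.C c).coeff 1 = 0 := by
      simp [Polynomial.coeff_X_pow]
    rw [hc0] at h0
    rw [hc1] at h1
    rw [_root_.map_zero] at h1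
    replace h1 := h1.symm
    -- h0 : algebraMap A2 K c = c₁ * c₂, h1 : 0 = c₁ + c₂
    obtain ⟨a, b, hb, hab⟩ := IsFractionRing.div_surjective (A := A2) c₁
    have hkey : algebraMap A2 K (a ^ 2 + c * b ^ 2) = 0 := by
      have hbne : algebraMap A2 K b ≠ 0 := by
        intro hh
        exact nonZeroDivisors.ne_zero hb (IsFractionRing.injective A2 K (by simpa using hh))
      have hc₂ : c₂ = -c₁ := by linear_combination h1
      rw [_root_.map_add, _root_.map_mul, _root_.map_pow, _root_.map_pow, h0, hc₂]
      rw [← hab]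
      have hinv : algebraMap A2 K b * (algebraMap A2 K b)⁻¹ = 1 := mul_inv_cancel₀ hbne
      linear_combination (-(algebraMap A2 K a) ^ 2 * (algebraMap A2 K b * (algebraMap A2 K b)⁻¹ + 1)) * hinv
    have hz : (a ^ 2 + c * b ^ 2 : A2) = 0 := by
      apply IsFractionRing.injective A2 K
      simpa using hkey
    have ha : (a : A2) = 0 := by
      have heval : ∀ y : Fin 2 → ℝ, eval y a = 0 := by
        intro y
        have := congrArg (eval y) hz
        simp only [_root_.map_add, _root_.map_mul, _root_.map_pow, hc, eval_X, _root_.map_zero] at this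
        nlinarith [sq_nonneg (eval y a), sq_nonneg (eval y b), sq_nonneg (y 0), sq_nonneg (y 1),
          sq_nonneg (eval y b * y 0), sq_nonneg (eval y b * y 1)]
      have := MvPolynomial.funext (p := a) (q := 0) (by simpa using heval)
      exact this
    rw [ha] at hz
    have hbz : (b : A2) = 0 := by
      have : c * b ^ 2 = 0 := by linear_combination hz
      rcases mul_eq_zero.mp this with h | h
      · exact absurd h c_ne
      · exact pow_eq_zero_iff (by norm_num) |>.mp h
    exact nonZeroDivisors.ne_zero hb hbz
  exact irrprime hirr


theorem Qne : (X 0 ^ 2 + X 1 ^ 2 + X 2 ^ 2 : MvPolynomial (Fin 3) ℝ) ≠ 0 := by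
  intro hc
  have := congrArg (eval (fun _ => (1:ℝ))) hc
  simp at this
  norm_num at this

theorem Qhom : (X 0 ^ 2 + X 1 ^ 2 + X 2 ^ 2 : MvPolynomial (Fin 3) ℝ).IsHomogeneous 2 := by
  have : ∀ i : Fin 3, (X i ^ 2 : MvPolynomial (Fin 3) ℝ).IsHomogeneous 2 :=
    fun i => isHomogeneous_X_pow i 2
  exact ((this 0).add (this 1)).add (this 2)

theorem hc_td_ne {V : MvPolynomial (Fin 3) ℝ} (hV : V ≠ 0) :
    homogeneousComponent V.totalDegree V ≠ 0 := by
  obtain ⟨d, hd, hdeg⟩ := V.support.exists_mem_eq_sup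
    (MvPolynomial.support_nonempty.mpr hV) (fun s => s.sum fun _ e => e)
  intro h0
  have hco : coeff d (homogeneousComponent V.totalDegree V) = coeff d V := by
    rw [coeff_homogeneousComponent, if_pos]
    show d.sum (fun _ e => e) = V.totalDegree
    rw [MvPolynomial.totalDegree, hdeg]
  rw [h0] at hco
  exact (MvPolynomial.mem_support_iff.mp hd) (by simpa using hco.symm)

theorem td_mul_ge {V : MvPolynomial (Fin 3) ℝ} (hV : V ≠ 0) :
    V.totalDegree + 2 ≤ ((X 0 ^ 2 + X 1 ^ 2 + X 2 ^ 2) * V).totalDegree := by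
  set Q : MvPolynomial (Fin 3) ℝ := X 0 ^ 2 + X 1 ^ 2 + X 2 ^ 2 with hQ
  set k := V.totalDegree with hk
  have hcomp : homogeneousComponent (k + 2) (Q * V) = Q * homogeneousComponent k V := by
    conv_lhs => rw [← sum_homogeneousComponent V]
    rw [Finset.mul_sum, map_sum]
    have hterm : ∀ i ∈ Finset.range (k + 1),
        homogeneousComponent (k + 2) (Q * homogeneousComponent i V)
          = if i = k then Q * homogeneousComponent k V else 0 := by
      intro i hi
      have hmem : Q * homogeneousComponent i V ∈ homogeneousSubmodule (Fin 3) ℝ (2 + i) := by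
        rw [mem_homogeneousSubmodule]
        exact Qhom.mul (homogeneousComponent_isHomogeneous i V)
      rw [homogeneousComponent_of_mem hmem]
      by_cases hik : i = k
      · subst hik; simp [add_comm]
      · rw [if_neg (by omega), if_neg hik]
    rw [Finset.sum_congr rfl hterm, Finset.sum_ite_eq' (Finset.range (k+1)) k
      (fun _ => Q * homogeneousComponent k V), if_pos (Finset.self_mem_range_succ k)]
  have hne : homogeneousComponent (k + 2) (Q * V) ≠ 0 := by
    rw [hcomp]
    exact mul_ne_zero Qne (hc_td_ne hV)
  by_contra hlt
  push_neg at hlt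
  have hzero : homogeneousComponent (k + 2) (Q * V) = 0 :=
    homogeneousComponent_eq_zero _ _ (by omega)
  exact hne hzero

end Stmt6Aux

open MvPolynomial in
set_option maxHeartbeats 2000000 in
/-- if `τ ∈ P_m(ℝ³;𝕊)` and `x×(τ(x)×x) = 0` for all `x`, then
`τ(x) = sym(v(x) xᵀ)` for some `v ∈ P_{m-1}(ℝ³;ℝ³)`. -/
theorem stmt_6 (m : ℕ) (τ : V3 → M3) (hτ : PolySym m τ)
    (h : ∀ x : V3, bCrossA x (aCrossB (τ x) x) = 0) :
    ∃ v : V3 → V3, PolyVec ((m : ℤ) - 1) v ∧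
      ∀ x : V3, τ x = symMat (Matrix.vecMulVec (v x) x) := by
  classical
  obtain ⟨hPmat, hsymτ⟩ := hτ
  choose P hdeg hfun using hPmat
  have hPe : ∀ a b (x : V3), τ x a b = eval x (P a b) :=
    fun a b x => congrFun (hfun a b) x
  have hPsym : ∀ a b, P b a = P a b := by
    intro a b
    apply MvPolynomial.funext
    intro x
    rw [← hPe, ← hPe]
    have := congrFun (congrFun (hsymτ x) a) b
    rw [Matrix.transpose_apply] at this
    exact this
  set Qp : MvPolynomial (Fin 3) ℝ := X 0 ^ 2 + X 1 ^ 2 + X 2 ^ 2 with hQp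
  set Wp : Fin 3 → MvPolynomial (Fin 3) ℝ :=
    fun i => 2 * (∑ l, P i l * X l) - (∑ l, P l l) * X i with hWp
  have hEx : ∀ (x : V3) (a b : Fin 3),
      (∑ k, ∑ l, eps a k l * x k *
        (∑ k', ∑ l', eps b k' l' * eval x (P l k') * x l')) = 0 := by
    intro x a b
    have h0 := congrFun (congrFun (h x) a) b
    simp only [bCrossA, aCrossB, Matrix.of_apply, Matrix.zero_apply, hPe] at h0
    exact h0
  have key : ∀ i j, Qp * (2 * P i j) = Wp i * X j + Wp j * X i := by
    intro i j
    apply MvPolynomial.funext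
    intro x
    have h00 := hEx x 0 0
    have h01 := hEx x 0 1
    have h02 := hEx x 0 2
    have h10 := hEx x 1 0
    have h11 := hEx x 1 1
    have h12 := hEx x 1 2
    have h20 := hEx x 2 0
    have h21 := hEx x 2 1
    have h22 := hEx x 2 2
    have hs10 : P 1 0 = P 0 1 := hPsym 0 1
    have hs20 : P 2 0 = P 0 2 := hPsym 0 2
    have hs21 : P 2 1 = P 1 2 := hPsym 1 2
    simp only [Fin.sum_univ_three, hs10, hs20, hs21] at h00 h01 h02 h10 h11 h12 h20 h21 h22
    norm_num [eps] at h00 h01 h02 h10 h11 h12 h20 h21 h22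
    simp only [hQp, hWp, Fin.sum_univ_three, _root_.map_add,
      _root_.map_sub, _root_.map_mul, _root_.map_pow, map_ofNat, eval_C, eval_X]
    have hfin : ∀ u : Fin 3, u = 0 ∨ u = 1 ∨ u = 2 := by decide
    rcases hfin i with rfl|rfl|rfl <;> rcases hfin j with rfl|rfl|rfl <;>
      try simp only [hs10, hs20, hs21]
    · linear_combination (2:ℝ) * h00 - 2 * (h00 + h11 + h22)
    · linear_combination (2:ℝ) * h01
    · linear_combination (2:ℝ) * h02
    · linear_combination (2:ℝ) * h10
    · linear_combination (2:ℝ) * h11 - 2 * (h00 + h11 + h22)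
    · linear_combination (2:ℝ) * h12
    · linear_combination (2:ℝ) * h20
    · linear_combination (2:ℝ) * h21
    · linear_combination (2:ℝ) * h22 - 2 * (h00 + h11 + h22)
  have hQne : Qp ≠ 0 := Stmt6Aux.Qne
  have hQprime : Prime Qp := Stmt6Aux.primeQ
  have h2ne : (2 : MvPolynomial (Fin 3) ℝ) ≠ 0 := by
    intro hh
    have h3 := congrArg (eval (fun _ => (0:ℝ))) hh
    rw [map_ofNat, _root_.map_zero] at h3
    norm_num at h3
  have hPtd : ∀ a b, (P a b).totalDegree ≤ m := by
    intro a b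
    rw [MvPolynomial.totalDegree]
    apply Finset.sup_le
    intro d hd
    have h1 := hdeg a b d hd
    have h2 : (d.sum fun _ e => e) = ∑ i, d i := Finsupp.sum_fintype _ _ (fun _ => rfl)
    rw [h2]
    exact_mod_cast h1
  have hWtd : ∀ i, (Wp i).totalDegree ≤ m + 1 := by
    intro i
    rw [hWp]
    refine le_trans (MvPolynomial.totalDegree_sub _ _) (max_le ?_ ?_)
    · refine le_trans (MvPolynomial.totalDegree_mul _ _) ?_
      have htd2 : (2 : MvPolynomial (Fin 3) ℝ).totalDegree = 0 := by
        rw [show (2 : MvPolynomial (Fin 3) ℝ) = C 2 by rw [map_ofNat]]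
        exact MvPolynomial.totalDegree_C _
      rw [htd2, zero_add]
      refine le_trans (MvPolynomial.totalDegree_finset_sum _ _) ?_
      apply Finset.sup_le
      intro l _
      refine le_trans (MvPolynomial.totalDegree_mul _ _) ?_
      rw [MvPolynomial.totalDegree_X]
      exact add_le_add_left (hPtd i l) 1
    · refine le_trans (MvPolynomial.totalDegree_mul _ _) ?_
      rw [MvPolynomial.totalDegree_X]
      refine add_le_add_left ?_ 1
      refine le_trans (MvPolynomial.totalDegree_finset_sum _ _) ?_
      exact Finset.sup_le (fun l _ => hPtd l l)
  have hdvdW : ∀ i, Qp ∣ Wp i := by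
    intro i
    have hWX : Wp i * X i = Qp * P i i := by
      apply mul_left_cancel₀ h2ne
      linear_combination (key i i).symm
    have hdvd2 : Qp ∣ Wp i * X i := ⟨P i i, hWX⟩
    rcases hQprime.2.2 _ _ hdvd2 with hgood | hbad
    · exact hgood
    · exfalso
      obtain ⟨u, hu⟩ := hbad
      have hune : u ≠ 0 := by
        intro hz
        rw [hz, mul_zero] at hu
        exact MvPolynomial.X_ne_zero i hu
      have h1 := Stmt6Aux.td_mul_ge hune
      rw [← hQp, ← hu, MvPolynomial.totalDegree_X] at h1
      omega
  choose Vp hVp using hdvdW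
  have hPV : ∀ i j, (2 : MvPolynomial (Fin 3) ℝ) * P i j = Vp i * X j + Vp j * X i := by
    intro i j
    apply mul_left_cancel₀ hQne
    linear_combination (key i j) + (X j : MvPolynomial (Fin 3) ℝ) * (hVp i)
      + (X i : MvPolynomial (Fin 3) ℝ) * (hVp j)
  refine ⟨fun x k => eval x (Vp k), ?_, ?_⟩
  · intro k
    refine ⟨Vp k, ?_, rfl⟩
    intro d hd
    by_cases hz : Vp k = 0
    · rw [hz] at hd
      simp at hd
    · have h1 : (Vp k).totalDegree + 2 ≤ (Qp * Vp k).totalDegree := by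
        have := Stmt6Aux.td_mul_ge hz
        rw [← hQp] at this
        exact this
      rw [← hVp k] at h1
      have h2 := hWtd k
      have h3 : (d.sum fun _ e => e) ≤ (Vp k).totalDegree := MvPolynomial.le_totalDegree hd
      have h4 : (d.sum fun _ e => e) = ∑ i, d i := Finsupp.sum_fintype _ _ (fun _ => rfl)
      rw [← h4]
      omega
  · intro x
    ext i j
    have hev := congrArg (eval x) (hPV i j)
    simp only [_root_.map_add, _root_.map_mul, map_ofNat, eval_C, eval_X] at hev
    rw [hPe i j x]
    simp only [symMat, Matrix.smul_apply, Matrix.add_apply, Matrix.transpose_apply,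
      Matrix.vecMulVec_apply, smul_eq_mul]
    linarith [hev]
end
end

section
/- Let k ≥ 0 be an integer. If τ ∈ P_k(ℝ³;𝕊) satisfies τ(x)·x = 0 for all x ∈ ℝ³, then there exists σ ∈ P_{k-2}(ℝ³;𝕊) such that τ(x) = x×(σ(x)×x) for all x ∈ ℝ³. -/
open Matrix

noncomputable section

section Stmt7AuxSec
open MvPolynomial
namespace Stmt7Aux

abbrev R3 : Type := MvPolynomial (Fin 3) ℝ

lemma X_dvd_of_coeff (i : Fin 3) (p : R3) (h : ∀ d : Fin 3 →₀ ℕ, d i = 0 → coeff d p = 0) :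
    X i ∣ p := by
  rw [X_dvd_iff_modMonomial_eq_zero]
  ext d
  rw [coeff_zero]
  by_cases hd : d i = 0
  · have hp := modMonomial_add_divMonomial p (Finsupp.single i 1)
    have h2 : coeff d ((monomial (Finsupp.single i 1) (1:ℝ)) *
        (p.divMonomial (Finsupp.single i 1))) = 0 := by
      rw [coeff_monomial_mul']
      rw [if_neg]
      rw [Finsupp.single_le_iff]
      omega
    have := congrArg (coeff d) hp
    rw [coeff_add, h2, add_zero] at this
    rw [this]
    exact h d hd
  · exact coeff_modMonomial_of_le p (Finsupp.single_le_iff.2 (Nat.one_le_iff_ne_zero.2 hd))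

lemma dvd_of_mul_X_eq {i j : Fin 3} (hij : i ≠ j) {p q : R3} (h : p * X i = q * X j) :
    X j ∣ p := by
  apply X_dvd_of_coeff
  intro d hd
  have h1 : coeff (d + Finsupp.single i 1) (p * X i) = coeff d p := coeff_mul_X d i p
  rw [h, coeff_mul_X'] at h1
  rw [← h1]
  have hj : ((d + Finsupp.single i 1) : Fin 3 →₀ ℕ) j = 0 := by
    rw [Finsupp.add_apply, Finsupp.single_apply, if_neg hij, hd]
    rfl
  rw [if_neg]
  rw [Finsupp.mem_support_iff]
  simp [hj]
  try rfl

lemma koszul (v : Fin 3 → R3) (h : v 0 * X 0 + v 1 * X 1 + v 2 * X 2 = 0) :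
    ∃ u : Fin 3 → R3, v 0 = u 1 * X 2 - u 2 * X 1 ∧ v 1 = u 2 * X 0 - u 0 * X 2 ∧
      v 2 = u 0 * X 1 - u 1 * X 0 := by
  set φ : R3 →ₐ[ℝ] R3 := aeval (fun j : Fin 3 => if j = 2 then 0 else X j) with hφ
  have hφX : ∀ j : Fin 3, φ (X j) = if j = 2 then 0 else X j := fun j => aeval_X _ j
  have key : ∀ t : R3, X 2 ∣ (t - φ t) := by
    intro t
    induction t using MvPolynomial.induction_on with
    | C a => simp [hφ, algHom_C]
    | add p q hp hq =>
      have : p + q - φ (p + q) = (p - φ p) + (q - φ q) := by rw [map_add]; ring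
      rw [this]; exact dvd_add hp hq
    | mul_X p n hp =>
      rw [_root_.map_mul, hφX n]
      by_cases hn : n = 2
      · subst hn; simp
      · rw [if_neg hn]
        have : p * X n - φ p * X n = (p - φ p) * X n := by ring
        rw [this]
        exact Dvd.dvd.mul_right hp _
  have hφ0 : φ (X 0) = X 0 := by rw [hφX]; exact if_neg (by decide)
  have hφ1 : φ (X 1) = X 1 := by rw [hφX]; exact if_neg (by decide)
  have hφ2 : φ (X 2) = 0 := by rw [hφX]; exact if_pos rfl
  have hmap := congrArg φ h
  simp only [map_add, _root_.map_mul, hφ0, hφ1, hφ2, mul_zero, add_zero, map_zero] at hmap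
  -- hmap : φ (v 0) * X 0 + φ (v 1) * X 1 = 0
  have hdvd : X 1 ∣ φ (v 0) := by
    apply dvd_of_mul_X_eq (show (0:Fin 3) ≠ 1 by decide)
    have : φ (v 0) * X 0 = (-φ (v 1)) * X 1 := by linear_combination hmap
    exact this
  obtain ⟨g, hg⟩ := hdvd
  obtain ⟨a, ha⟩ := key (v 0)
  obtain ⟨b, hb⟩ := key (v 1)
  have hv1φ : φ (v 1) = -(X 0 * g) := by
    have hX1 : (X 1 : R3) ≠ 0 := X_ne_zero 1
    apply mul_left_cancel₀ hX1
    linear_combination hmap - X 0 * hg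
  have hv0 : v 0 = X 1 * g + X 2 * a := by linear_combination ha + hg
  have hv1 : v 1 = -(X 0 * g) + X 2 * b := by linear_combination hb + hv1φ
  have hv2 : v 2 = -(a * X 0 + b * X 1) := by
    have hX2 : (X 2 : R3) ≠ 0 := X_ne_zero 2
    apply mul_right_cancel₀ hX2
    linear_combination h - X 0 * hv0 - X 1 * hv1
  refine ⟨![-b, a, -g], ?_, ?_, ?_⟩ <;> simp [hv0, hv1, hv2] <;> ring

lemma colinear (w : Fin 3 → R3) (h01 : w 0 * X 1 = w 1 * X 0) (h02 : w 0 * X 2 = w 2 * X 0) :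
    ∃ f : R3, ∀ i, w i = f * X i := by
  obtain ⟨f, hf⟩ := dvd_of_mul_X_eq (show (1:Fin 3) ≠ 0 by decide) h01
  have hX0 : (X 0 : R3) ≠ 0 := X_ne_zero 0
  refine ⟨f, ?_⟩
  have h1 : w 1 = f * X 1 := by
    apply mul_right_cancel₀ hX0
    linear_combination -h01 + X 1 * hf
  have h2 : w 2 = f * X 2 := by
    apply mul_right_cancel₀ hX0
    linear_combination -h02 + X 2 * hf
  intro i
  fin_cases i
  · simpa [mul_comm] using hf
  · exact h1
  · exact h2


def degZ (d : Fin 3 →₀ ℕ) : ℤ := ((∑ i, d i : ℕ) : ℤ)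

def trunc (m : ℤ) (p : R3) : R3 :=
  ∑ d ∈ p.support.filter (fun d => degZ d ≤ m), monomial d (coeff d p)

lemma coeff_trunc (m : ℤ) (p : R3) (d : Fin 3 →₀ ℕ) :
    coeff d (trunc m p) = if degZ d ≤ m then coeff d p else 0 := by
  unfold trunc
  rw [coeff_sum]
  simp_rw [coeff_monomial]
  rw [Finset.sum_ite_eq' _ d (fun d' => coeff d' p)]
  simp only [Finset.mem_filter, mem_support_iff]
  split_ifs with h1 h2 h3 <;> try rfl
  · tauto
  · by_contra hc
    exact h1 ⟨fun h0 => hc h0.symm, h3⟩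

lemma trunc_eq_self {m : ℤ} {p : R3} (h : ∀ d ∈ p.support, degZ d ≤ m) : trunc m p = p := by
  ext d
  rw [coeff_trunc]
  split_ifs with h1
  · rfl
  · by_contra hc
    exact h1 (h d (mem_support_iff.2 fun h0 => hc h0.symm))

lemma trunc_support {m : ℤ} {p : R3} : ∀ d ∈ (trunc m p).support, degZ d ≤ m := by
  intro d hd
  rw [mem_support_iff, coeff_trunc] at hd
  by_contra hc
  exact hd (if_neg hc)

lemma trunc_sum {m : ℤ} {α : Type*} (t : Finset α) (f : α → R3) :
    trunc m (∑ x ∈ t, f x) = ∑ x ∈ t, trunc m (f x) := by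
  ext d
  simp only [coeff_sum, coeff_trunc]
  by_cases h : degZ d ≤ m <;> simp [h]

lemma trunc_C_mul (m : ℤ) (r : ℝ) (t : R3) : trunc m (C r * t) = C r * trunc m t := by
  ext d
  rw [coeff_trunc, coeff_C_mul, coeff_C_mul, coeff_trunc]
  by_cases h : degZ d ≤ m <;> simp [h]

lemma degZ_sub_single {d : Fin 3 →₀ ℕ} {a : Fin 3} (ha : d a ≠ 0) :
    degZ (d - Finsupp.single a 1) = degZ d - 1 := by
  have h2 : ∀ i, ((d - Finsupp.single a 1 : Fin 3 →₀ ℕ)) i = d i - (if a = i then 1 else 0) := by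
    intro i
    rw [Finsupp.tsub_apply, Finsupp.single_apply]
  have key : (∑ i, ((d - Finsupp.single a 1 : Fin 3 →₀ ℕ)) i) + 1 = ∑ i, d i := by
    simp only [h2, Fin.sum_univ_three]
    fin_cases a <;> simp_all <;> omega
  unfold degZ
  omega

lemma trunc_mul_X (m : ℤ) (t : R3) (a : Fin 3) :
    trunc m (t * X a) = trunc (m - 1) t * X a := by
  ext d
  rw [coeff_trunc, coeff_mul_X', coeff_mul_X']
  by_cases hm : a ∈ d.support
  · rw [if_pos hm, if_pos hm, coeff_trunc]
    rw [Finsupp.mem_support_iff] at hm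
    rw [degZ_sub_single hm]
    by_cases h : degZ d ≤ m
    · rw [if_pos h, if_pos (by omega)]
    · rw [if_neg h, if_neg (by omega)]
  · rw [if_neg hm, if_neg hm, ite_self]

lemma trunc_term (m : ℤ) (r1 r2 : ℝ) (a b : Fin 3) (q : R3) :
    trunc m (C r1 * X a * (C r2 * q * X b)) = C r1 * X a * (C r2 * trunc (m - 2) q * X b) := by
  rw [show C r1 * X a * (C r2 * q * X b) = C r1 * (C r2 * (q * X b * X a)) by ring,
      trunc_C_mul, trunc_C_mul, trunc_mul_X, trunc_mul_X, show m - 1 - 1 = m - 2 by ring]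
  ring


lemma half_sum (ii jj : Fin 3) (s2 : Fin 3 → Fin 3 → R3) :
    C (2⁻¹:ℝ) * (∑ k, ∑ l, C (eps ii k l) * X k * (∑ m, ∑ n, C (eps jj m n) * s2 l m * X n))
    = ∑ k, ∑ l, C (eps ii k l) * X k *
        (∑ m, ∑ n, C (eps jj m n) * (C (2⁻¹:ℝ) * s2 l m) * X n) := by
  rw [Finset.mul_sum]
  refine Finset.sum_congr rfl fun k _ => ?_
  rw [Finset.mul_sum]
  refine Finset.sum_congr rfl fun l _ => ?_
  rw [show ∀ a b : R3, ∀ c : ℝ, C c * (a * b) = a * (C c * b) from fun a b c => by ring,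
      Finset.mul_sum]
  refine congrArg _ (Finset.sum_congr rfl fun m _ => ?_)
  rw [Finset.mul_sum]
  refine Finset.sum_congr rfl fun n _ => ?_
  ring

set_option maxHeartbeats 2000000 in
lemma main_poly (p : Fin 3 → Fin 3 → R3)
    (hsym : ∀ i j, p i j = p j i)
    (hrow : ∀ i, p i 0 * X 0 + p i 1 * X 1 + p i 2 * X 2 = 0) :
    ∃ s : Fin 3 → Fin 3 → R3, (∀ l m, s l m = s m l) ∧
      ∀ i j, p i j = ∑ k, ∑ l, C (eps i k l) * X k *
        (∑ m, ∑ n, C (eps j m n) * s l m * X n) := by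
  have H1 : ∀ i, ∃ u : Fin 3 → R3, p i 0 = u 1 * X 2 - u 2 * X 1 ∧
      p i 1 = u 2 * X 0 - u 0 * X 2 ∧ p i 2 = u 0 * X 1 - u 1 * X 0 :=
    fun i => koszul (fun j => p i j) (hrow i)
  choose U hU0 hU1 hU2 using H1
  have hcol : ∀ j, X 0 * p 0 j + X 1 * p 1 j + X 2 * p 2 j = 0 := by
    intro j
    linear_combination hrow j + X 0 * hsym 0 j + X 1 * hsym 1 j + X 2 * hsym 2 j
  have hw01 : (X 0 * U 0 0 + X 1 * U 1 0 + X 2 * U 2 0) * X 1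
      = (X 0 * U 0 1 + X 1 * U 1 1 + X 2 * U 2 1) * X 0 := by
    have h := hcol 2
    rw [hU2 0, hU2 1, hU2 2] at h
    linear_combination h
  have hw02 : (X 0 * U 0 0 + X 1 * U 1 0 + X 2 * U 2 0) * X 2
      = (X 0 * U 0 2 + X 1 * U 1 2 + X 2 * U 2 2) * X 0 := by
    have h := hcol 1
    rw [hU1 0, hU1 1, hU1 2] at h
    linear_combination -h
  obtain ⟨f, hf⟩ := colinear (fun j => X 0 * U 0 j + X 1 * U 1 j + X 2 * U 2 j) hw01 hw02
  have hf' : ∀ j, X 0 * U 0 j + X 1 * U 1 j + X 2 * U 2 j = f * X j := hf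
  have hite : ∀ j : Fin 3, (if (0:Fin 3) = j then f else 0) * X 0 +
      (if (1:Fin 3) = j then f else 0) * X 1 + (if (2:Fin 3) = j then f else 0) * X 2
      = f * X j := by
    have h3 : ∀ r : Fin 3, r = 0 ∨ r = 1 ∨ r = 2 := by decide
    intro j
    rcases h3 j with rfl|rfl|rfl <;> norm_num [Fin.ext_iff]
  have H2 : ∀ j, ∃ u : Fin 3 → R3,
      U 0 j - (if (0:Fin 3) = j then f else 0) = u 1 * X 2 - u 2 * X 1 ∧
      U 1 j - (if (1:Fin 3) = j then f else 0) = u 2 * X 0 - u 0 * X 2 ∧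
      U 2 j - (if (2:Fin 3) = j then f else 0) = u 0 * X 1 - u 1 * X 0 := by
    intro j
    refine koszul (fun c => U c j - (if c = j then f else 0)) ?_
    show (U 0 j - (if (0:Fin 3) = j then f else 0)) * X 0 +
      (U 1 j - (if (1:Fin 3) = j then f else 0)) * X 1 +
      (U 2 j - (if (2:Fin 3) = j then f else 0)) * X 2 = 0
    linear_combination hf' j - hite j
  choose B hB0 hB1 hB2 using H2
  have hU'0 : ∀ j, U 0 j = (if (0:Fin 3) = j then f else 0) + (B j 1 * X 2 - B j 2 * X 1) :=
    fun j => by linear_combination hB0 j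
  have hU'1 : ∀ j, U 1 j = (if (1:Fin 3) = j then f else 0) + (B j 2 * X 0 - B j 0 * X 2) :=
    fun j => by linear_combination hB1 j
  have hU'2 : ∀ j, U 2 j = (if (2:Fin 3) = j then f else 0) + (B j 0 * X 1 - B j 1 * X 0) :=
    fun j => by linear_combination hB2 j
  refine ⟨fun l m => C (2⁻¹:ℝ) * (-(B l m + B m l)), fun l m => by ring, ?_⟩
  intro i j
  have hC2 : (C (2⁻¹:ℝ) * 2 : R3) = 1 := by
    rw [← map_ofNat (C : ℝ →+* R3) 2, ← C_mul]
    norm_num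
  have h2 : 2 * p i j = ∑ k, ∑ l, C (eps i k l) * X k *
      (∑ m, ∑ n, C (eps j m n) * (-(B l m + B m l)) * X n) := by
    have hij := hsym i j
    have h3 : ∀ r : Fin 3, r = 0 ∨ r = 1 ∨ r = 2 := by decide
    rcases h3 i with rfl|rfl|rfl <;> rcases h3 j with rfl|rfl|rfl
    all_goals simp only [Fin.sum_univ_three]
    all_goals simp only [hU0, hU1, hU2, hU'0, hU'1, hU'2] at hij ⊢
    all_goals (try norm_num [Fin.ext_iff] at hij)
    all_goals norm_num [eps, Fin.ext_iff]
    all_goals first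
      | ring1
      | linear_combination hij
      | linear_combination -hij
      | linear_combination 2 * hij
      | linear_combination -2 * hij
  calc p i j = C (2⁻¹:ℝ) * (2 * p i j) := by linear_combination (-(p i j)) * hC2
  _ = _ := by rw [h2, half_sum]


lemma trunc_big (mm : ℤ) (i j : Fin 3) (s : Fin 3 → Fin 3 → R3) :
    trunc mm (∑ k, ∑ l, C (eps i k l) * X k * (∑ m, ∑ n, C (eps j m n) * s l m * X n))
    = ∑ k, ∑ l, C (eps i k l) * X k *
        (∑ m, ∑ n, C (eps j m n) * trunc (mm - 2) (s l m) * X n) := by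
  simp only [Finset.mul_sum, trunc_sum, trunc_term]

theorem final (k : ℕ) (τ : V3 → M3) (hτ : PolySym k τ)
    (h : ∀ x : V3, (τ x).mulVec x = 0) :
    ∃ σ : V3 → M3, PolySym ((k : ℤ) - 2) σ ∧
      ∀ x : V3, τ x = bCrossA x (aCrossB (σ x) x) := by
  obtain ⟨hPM, hTsym⟩ := hτ
  choose p hdeg hfeq using hPM
  have heval : ∀ i j x, τ x i j = eval x (p i j) := fun i j x => congrFun (hfeq i j) x
  have hpsym : ∀ i j, p i j = p j i := by
    intro i j
    apply MvPolynomial.funext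
    intro x
    have hT := congrFun (congrFun (hTsym x) j) i
    rw [Matrix.transpose_apply] at hT
    rw [← heval, ← heval, hT]
  have hrow : ∀ i, p i 0 * X 0 + p i 1 * X 1 + p i 2 * X 2 = 0 := by
    intro i
    apply MvPolynomial.funext
    intro x
    have hx := congrFun (h x) i
    simp only [Matrix.mulVec, dotProduct, Fin.sum_univ_three, Pi.zero_apply] at hx
    simp only [map_add, _root_.map_mul, eval_X, map_zero]
    rw [← heval, ← heval, ← heval]
    exact hx
  obtain ⟨s, hssym, hsid⟩ := main_poly p hpsym hrow
  have hid' : ∀ i j, p i j = ∑ k', ∑ l, C (eps i k' l) * X k' *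
      (∑ m, ∑ n, C (eps j m n) * trunc ((k:ℤ) - 2) (s l m) * X n) := by
    intro i j
    have h1 : trunc (k:ℤ) (p i j) = p i j :=
      trunc_eq_self (fun d hd => hdeg i j d hd)
    rw [← h1, congrArg (trunc (k:ℤ)) (hsid i j), trunc_big]
  refine ⟨fun x => Matrix.of fun l m => eval x (trunc ((k:ℤ) - 2) (s l m)), ⟨?_, ?_⟩, ?_⟩
  · intro l m
    exact ⟨trunc ((k:ℤ) - 2) (s l m), fun d hd => trunc_support d hd, rfl⟩
  · intro x
    ext i j
    simp only [Matrix.transpose_apply, Matrix.of_apply]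
    rw [hssym j i]
  · intro x
    ext i j
    rw [heval i j x, hid' i j]
    simp only [map_sum, _root_.map_mul, eval_C, eval_X, bCrossA, aCrossB, Matrix.of_apply]

end Stmt7Aux
end Stmt7AuxSec

/-- if `τ ∈ P_k(ℝ³;𝕊)` and `τ(x)·x = 0` for all `x`, then
`τ(x) = x×(σ(x)×x)` for some `σ ∈ P_{k-2}(ℝ³;𝕊)`. -/
theorem stmt_7 (k : ℕ) (τ : V3 → M3) (hτ : PolySym k τ)
    (h : ∀ x : V3, (τ x).mulVec x = 0) :
    ∃ σ : V3 → M3, PolySym ((k : ℤ) - 2) σ ∧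
      ∀ x : V3, τ x = bCrossA x (aCrossB (σ x) x) := by
  exact Stmt7Aux.final k τ hτ h
end
end

section
/- For every integer k ≥ 0, the linear subspace { x ↦ τ(x)·x : τ ∈ P_k(ℝ³;𝕊) } of P_{k+1}(ℝ³;ℝ³) has dimension (1/2)(k+4)(k+3)(k+2) − 6. -/
open Matrix

noncomputable section

namespace Stmt8

open MvPolynomial Finset

/-- product monomial -/
def mono (d : Fin 3 → ℕ) : V3 → ℝ := fun x => ∏ t, x t ^ d t

/-- vector monomial -/
def vmono (d : Fin 3 → ℕ) (i : Fin 3) : V3 → V3 := fun x => Pi.single i (mono d x)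

/-- the symmetric generators -/
def Fm (d : Fin 3 → ℕ) (i j : Fin 3) : V3 → V3 :=
  fun x => mono d x • (Pi.single i (x j) + Pi.single j (x i))

def sing (i : Fin 3) : Fin 3 → ℕ := fun t => if t = i then 1 else 0

lemma mono_zero (x : V3) : mono 0 x = 1 := by simp [mono]

lemma mono_add_sing (d : Fin 3 → ℕ) (j : Fin 3) (x : V3) :
    mono (fun t => d t + sing j t) x = mono d x * x j := by
  unfold mono sing
  simp only []
  rw [Finset.prod_congr rfl (fun t (_ : t ∈ Finset.univ) => pow_add (x t) (d t) _)]
  rw [Finset.prod_mul_distrib]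
  congr 1
  have h : ∀ t : Fin 3, x t ^ (if t = j then 1 else 0) = if t = j then x t else 1 := by
    intro t; split <;> simp
  rw [Finset.prod_congr rfl (fun t _ => h t), Finset.prod_ite_eq' Finset.univ j x]
  simp

lemma Fm_symm (d : Fin 3 → ℕ) (i j : Fin 3) : Fm d i j = Fm d j i := by
  unfold Fm; funext x; rw [add_comm]

lemma Fm_eq_vmono_add (d : Fin 3 → ℕ) (i j : Fin 3) :
    Fm d i j = vmono (fun t => d t + sing j t) i + vmono (fun t => d t + sing i t) j := by
  funext x a
  simp only [Fm, vmono, Pi.add_apply, Pi.smul_apply, smul_eq_mul, mono_add_sing,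
    Pi.single_apply]
  split_ifs <;> ring

/-- Finsupp version of an exponent vector. -/
def fsp (d : Fin 3 → ℕ) : Fin 3 →₀ ℕ := Finsupp.equivFunOnFinite.symm d

@[simp] lemma fsp_apply (d : Fin 3 → ℕ) (t : Fin 3) : fsp d t = d t := rfl

lemma eval_monomial_fsp (d : Fin 3 → ℕ) (c : ℝ) (x : V3) :
    MvPolynomial.eval x (MvPolynomial.monomial (fsp d) c) = c * mono d x := by
  rw [MvPolynomial.eval_monomial]
  congr 1
  rw [Finsupp.prod_fintype]
  · rfl
  · intro t; rfl

/-- the symmetric elementary matrix -/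
def Esym (i j : Fin 3) : M3 :=
  Matrix.of fun a b =>
    (if a = i then if b = j then (1:ℝ) else 0 else 0) +
    (if a = j then if b = i then (1:ℝ) else 0 else 0)

/-- polynomial symmetric matrix field -/
def tF (d : Fin 3 → ℕ) (i j : Fin 3) : V3 → M3 := fun x => mono d x • Esym i j

lemma tF_polySym (k : ℕ) (d : Fin 3 → ℕ) (hd : ∑ t, d t ≤ k) (i j : Fin 3) :
    PolySym (k : ℤ) (tF d i j) := by
  constructor
  · intro a b
    refine ⟨MvPolynomial.monomial (fsp d) (Esym i j a b), ?_, ?_⟩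
    · intro D hD
      have := MvPolynomial.support_monomial_subset hD
      simp only [Finset.mem_singleton] at this
      subst this
      simp only [fsp_apply]
      exact_mod_cast hd
    · funext x
      rw [eval_monomial_fsp]
      simp [tF, mul_comm]
  · intro x
    ext a b
    simp only [tF, Matrix.transpose_apply, Matrix.smul_apply, Esym, Matrix.of_apply,
      smul_eq_mul]
    congr 1
    split_ifs <;> ring

lemma tF_mulVec (d : Fin 3 → ℕ) (i j : Fin 3) (x : V3) :
    (tF d i j x).mulVec x = Fm d i j x := by
  funext a
  simp only [tF, Fm, Matrix.mulVec, dotProduct, Matrix.smul_apply, Esym,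
    Matrix.of_apply, smul_eq_mul, Pi.smul_apply, Pi.add_apply, Pi.single_apply]
  have : ∀ b : Fin 3,
      mono d x * ((if a = i then if b = j then (1:ℝ) else 0 else 0) +
        if a = j then if b = i then (1:ℝ) else 0 else 0) * x b
      = (if b = j then (if a = i then mono d x * x j else 0) else 0) +
        (if b = i then (if a = j then mono d x * x i else 0) else 0) := by
    intro b; split_ifs <;> subst_vars <;> ring
  rw [Finset.sum_congr rfl (fun b _ => this b)]
  rw [Finset.sum_add_distrib, Finset.sum_ite_eq' Finset.univ j, Finset.sum_ite_eq' Finset.univ i]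
  simp [mul_add]

def SetS (k : ℕ) : Set (V3 → V3) :=
  {f : V3 → V3 | ∃ τ : V3 → M3, PolySym (k:ℤ) τ ∧ f = fun x => (τ x).mulVec x}

def spanS (k : ℕ) : Submodule ℝ (V3 → V3) := Submodule.span ℝ (SetS k)

lemma Fm_mem_S (k : ℕ) (d : Fin 3 → ℕ) (hd : ∑ t, d t ≤ k) (i j : Fin 3) :
    Fm d i j ∈ SetS k :=
  ⟨tF d i j, tF_polySym k d hd i j, funext fun x => (tF_mulVec d i j x).symm⟩

variable (k : ℕ)

lemma sum_sing (m : Fin 3) : ∑ t, sing m t = 1 := by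
  simp [sing, Finset.sum_ite_eq' Finset.univ m]

lemma mono_sing (m : Fin 3) (x : V3) : mono (sing m) x = x m := by
  have h : sing m = fun t => (0:ℕ) + sing m t := by funext t; simp
  rw [h, mono_add_sing]
  simp [mono]

lemma caseA (d : Fin 3 → ℕ) (i : Fin 3) (hdi : 1 ≤ d i) (hk : ∑ t, d t ≤ k + 1) :
    vmono d i ∈ spanS k := by
  set d' : Fin 3 → ℕ := fun t => d t - sing i t with hd'
  have hdd : d = fun t => d' t + sing i t := by
    funext t; simp only [hd', sing]; split_ifs with h
    · subst h; omega
    · omega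
  have hsum : ∑ t, d' t ≤ k := by
    have h1 : ∑ t, d t = (∑ t, d' t) + 1 := by
      conv_lhs => rw [hdd]
      rw [Finset.sum_add_distrib, sum_sing]
    omega
  have hident : vmono d i = (2⁻¹ : ℝ) • Fm d' i i := by
    funext x a
    have hm : mono d' x * x i = mono d x := by
      conv_rhs => rw [hdd]
      rw [mono_add_sing]
    simp only [vmono, Fm, Pi.smul_apply, Pi.add_apply, Pi.single_apply, smul_eq_mul]
    split_ifs with h
    · rw [← hm]; ring
    · ring
  rw [hident]
  exact Submodule.smul_mem _ _ (Submodule.subset_span (Fm_mem_S k d' hsum i i))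

lemma caseB (d : Fin 3 → ℕ) (i j : Fin 3) (hdi : d i = 0) (hdj : 2 ≤ d j)
    (hk : ∑ t, d t ≤ k + 1) : vmono d i ∈ spanS k := by
  have hij : j ≠ i := by intro h; subst h; omega
  set d' : Fin 3 → ℕ := fun t => d t - sing j t with hd'
  have hdd : d = fun t => d' t + sing j t := by
    funext t; simp only [hd', sing]; split_ifs with h
    · subst h; omega
    · omega
  have hsum' : ∑ t, d' t ≤ k := by
    have h1 : ∑ t, d t = (∑ t, d' t) + 1 := by
      conv_lhs => rw [hdd]
      rw [Finset.sum_add_distrib, sum_sing]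
    omega
  set e : Fin 3 → ℕ := fun t => d' t + sing i t with he
  have hFm : Fm d' i j = vmono d i + vmono e j := by
    rw [Fm_eq_vmono_add d' i j, ← hdd]
  have h1 : vmono d i = Fm d' i j - vmono e j := by rw [hFm]; abel
  have hej : 1 ≤ e j := by
    simp only [he, hd', sing]
    split_ifs <;> omega
  have hesum : ∑ t, e t ≤ k + 1 := by
    rw [he, Finset.sum_add_distrib, sum_sing]
    omega
  rw [h1]
  exact Submodule.sub_mem _ (Submodule.subset_span (Fm_mem_S k d' hsum' i j))
    (caseA k e j hej hesum)

lemma caseC' (d : Fin 3 → ℕ) (i j l : Fin 3) (hji : j ≠ i) (hli : l ≠ i) (hjl : j ≠ l)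
    (hdi : d i = 0) (hdj : d j = 1) (hdl : d l = 1) (hk1 : 1 ≤ k) :
    vmono d i ∈ spanS k := by
  have hmem : ∀ t : Fin 3, t = i ∨ t = j ∨ t = l := by
    intro t; by_contra h; push_neg at h
    obtain ⟨h1, h2, h3⟩ := h
    simp only [Ne, Fin.ext_iff] at h1 h2 h3 hji hli hjl
    omega
  have hd : d = fun t => sing j t + sing l t := by
    funext t
    rcases hmem t with rfl | rfl | rfl <;>
      simp_all [sing, Ne.symm hji, Ne.symm hli, hjl, Ne.symm hjl]
  have hmono : ∀ x : V3, mono d x = x j * x l := by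
    intro x
    rw [hd, mono_add_sing (sing j) l x, mono_sing]
  have hident : vmono d i =
      (2⁻¹ : ℝ) • (Fm (sing l) i j - Fm (sing i) j l + Fm (sing j) l i) := by
    funext x a
    simp only [vmono, Fm, Pi.smul_apply, Pi.add_apply, Pi.sub_apply, Pi.single_apply,
      smul_eq_mul, mono_sing, hmono]
    split_ifs <;> subst_vars <;> first | ring | simp_all | (exfalso; simp_all)
  rw [hident]
  have m1 : ∀ (m : Fin 3), ∑ t, sing m t ≤ k := fun m => by rw [sum_sing]; omega
  exact Submodule.smul_mem _ _
    (Submodule.add_mem _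
      (Submodule.sub_mem _ (Submodule.subset_span (Fm_mem_S k (sing l) (m1 l) i j))
        (Submodule.subset_span (Fm_mem_S k (sing i) (m1 i) j l)))
      (Submodule.subset_span (Fm_mem_S k (sing j) (m1 j) l i)))

lemma vmono_mem (d : Fin 3 → ℕ) (i : Fin 3) (h2 : 2 ≤ ∑ t, d t)
    (hk : ∑ t, d t ≤ k + 1) : vmono d i ∈ spanS k := by
  by_cases hdi : 1 ≤ d i
  · exact caseA k d i hdi hk
  · have hdi0 : d i = 0 := by omega
    by_cases hj : ∃ j, 2 ≤ d j
    · obtain ⟨j, hj⟩ := hj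
      exact caseB k d i j hdi0 hj hk
    · push_neg at hj
      obtain ⟨j, l, hji, hli, hjl⟩ : ∃ j l : Fin 3, j ≠ i ∧ l ≠ i ∧ j ≠ l := by
        fin_cases i
        · exact ⟨1, 2, by decide, by decide, by decide⟩
        · exact ⟨0, 2, by decide, by decide, by decide⟩
        · exact ⟨0, 1, by decide, by decide, by decide⟩
      have hsum3 : ∑ t, d t = d i + d j + d l := by
        have huniv : (Finset.univ : Finset (Fin 3)) = {i, j, l} := by
          fin_cases i <;> fin_cases j <;> fin_cases l <;> revert hji hli hjl <;> decide
        rw [huniv, Finset.sum_insert (by simp [Ne.symm hji, Ne.symm hli]),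
          Finset.sum_insert (by simp [hjl]), Finset.sum_singleton, Nat.add_assoc]
      have hdj : d j = 1 := by have := hj j; have := hj l; omega
      have hdl : d l = 1 := by have := hj j; have := hj l; omega
      have hk1 : 1 ≤ k := by omega
      exact caseC' k d i j l hji hli hjl hdi0 hdj hdl hk1

/-- exponent vectors of total degree `n` -/
def Slice (n : ℕ) : Type := {d : Fin 3 → ℕ // ∑ t, d t = n}

def sliceEquiv (n : ℕ) : Slice n ≃ Sym (Fin 3) n where
  toFun d := ⟨Finsupp.toMultiset (fsp d.1), by
    rw [Finsupp.card_toMultiset, Finsupp.sum_fintype _ _ (fun _ => rfl)]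
    exact d.2⟩
  invFun s := ⟨fun i => Multiset.toFinsupp (s : Multiset (Fin 3)) i, by
    have h2 : ∑ i : Fin 3, (Multiset.toFinsupp (s : Multiset (Fin 3))) i
        = Multiset.card (s : Multiset (Fin 3)) := by
      conv_rhs => rw [← Multiset.toFinsupp_toMultiset (s : Multiset (Fin 3))]
      rw [Finsupp.card_toMultiset, Finsupp.sum_fintype _ _ (fun _ => rfl)]
      rfl
    exact h2.trans s.2⟩
  left_inv d := by
    apply Subtype.ext
    funext i
    simp [Multiset.toFinsupp_apply, Finsupp.count_toMultiset]
  right_inv s := by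
    apply Subtype.ext
    have h : fsp (fun i => Multiset.toFinsupp (s : Multiset (Fin 3)) i)
        = Multiset.toFinsupp (s : Multiset (Fin 3)) := Finsupp.ext fun t => rfl
    show Finsupp.toMultiset (fsp fun i => Multiset.toFinsupp (s : Multiset (Fin 3)) i)
        = (s : Multiset (Fin 3))
    rw [h, Multiset.toFinsupp_toMultiset]

instance (n : ℕ) : Fintype (Slice n) := Fintype.ofEquiv _ (sliceEquiv n).symm

lemma card_slice (n : ℕ) : Fintype.card (Slice n) = (n + 2).choose 2 := by
  rw [Fintype.card_congr (sliceEquiv n), Sym.card_sym_eq_choose]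
  simp only [Fintype.card_fin]
  rw [show 3 + n - 1 = n + 2 by omega]
  have h := Nat.choose_symm (show 2 ≤ n + 2 by omega)
  rw [Nat.add_sub_cancel] at h
  exact h
def Idx (k : ℕ) : Type :=
  ((Σ _n : Fin k, Slice (_n + 2)) × Fin 3) ⊕ {p : Fin 3 × Fin 3 // p.1 ≤ p.2}

instance (k : ℕ) : Fintype (Idx k) := by unfold Idx; infer_instance

def bfun (k : ℕ) : Idx k → (V3 → V3)
  | .inl (⟨_, d⟩, i) => vmono d.1 i
  | .inr p => Fm 0 p.1.1 p.1.2

def spanB (k : ℕ) : Submodule ℝ (V3 → V3) := Submodule.span ℝ (Set.range (bfun k))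

lemma bfun_mem_spanS (k : ℕ) (t : Idx k) : bfun k t ∈ spanS k := by
  rcases t with ⟨⟨n, d⟩, i⟩ | p
  · have h := d.2
    have hn := n.2
    exact vmono_mem k d.1 i (by omega) (by omega)
  · exact Submodule.subset_span (Fm_mem_S k 0 (by simp) p.1.1 p.1.2)

lemma spanB_le_spanS (k : ℕ) : spanB k ≤ spanS k :=
  Submodule.span_le.2 (by rintro f ⟨t, rfl⟩; exact bfun_mem_spanS k t)

lemma vmono_mem_spanB (k : ℕ) (d : Fin 3 → ℕ) (i : Fin 3) (h2 : 2 ≤ ∑ t, d t)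
    (hk : ∑ t, d t ≤ k + 1) : vmono d i ∈ spanB k := by
  refine Submodule.subset_span ⟨.inl (⟨⟨∑ t, d t - 2, by omega⟩, ⟨d, show ∑ t, d t = (∑ t, d t - 2) + 2 by omega⟩⟩, i), rfl⟩

lemma Fm_mem_spanB (k : ℕ) (d : Fin 3 → ℕ) (i j : Fin 3) (hd : ∑ t, d t ≤ k) :
    Fm d i j ∈ spanB k := by
  by_cases h0 : ∑ t, d t = 0
  · have hd0 : d = 0 := by
      funext t
      have := (Finset.sum_eq_zero_iff).1 h0 t (Finset.mem_univ t)
      simpa using this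
    subst hd0
    by_cases hle : i ≤ j
    · exact Submodule.subset_span ⟨.inr ⟨(i, j), hle⟩, rfl⟩
    · rw [Fm_symm]
      exact Submodule.subset_span ⟨.inr ⟨(j, i), le_of_not_ge hle⟩, rfl⟩
  · rw [Fm_eq_vmono_add]
    have hs : ∀ m : Fin 3, ∑ t, (d t + sing m t) = (∑ t, d t) + 1 := by
      intro m; rw [Finset.sum_add_distrib, sum_sing]
    exact Submodule.add_mem _
      (vmono_mem_spanB k _ i (by rw [hs]; omega) (by rw [hs]; omega))
      (vmono_mem_spanB k _ j (by rw [hs]; omega) (by rw [hs]; omega))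

/-- polynomial-coefficient symmetric generator -/
def Gfun (q : MvPolynomial (Fin 3) ℝ) (i j : Fin 3) : V3 → V3 :=
  fun x => MvPolynomial.eval x q • (Pi.single i (x j) + Pi.single j (x i))

lemma Gfun_mem_spanB (k : ℕ) (q : MvPolynomial (Fin 3) ℝ)
    (hq : ∀ D ∈ q.support, ∑ t, D t ≤ k) (i j : Fin 3) : Gfun q i j ∈ spanB k := by
  have hexp : Gfun q i j = ∑ D ∈ q.support, MvPolynomial.coeff D q • Fm (⇑D) i j := by
    funext x
    simp only [Gfun, Finset.sum_apply, Pi.smul_apply, Fm]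
    rw [MvPolynomial.eval_eq']
    rw [Finset.sum_smul]
    refine Finset.sum_congr rfl fun D _ => ?_
    rw [smul_smul]
    rfl
  rw [hexp]
  exact Submodule.sum_mem _ fun D hD =>
    Submodule.smul_mem _ _ (Fm_mem_spanB k (⇑D) i j (hq D hD))

lemma SetS_subset_spanB (k : ℕ) : SetS k ⊆ ↑(spanB k) := by
  rintro f ⟨τ, ⟨hmat, hsymm⟩, rfl⟩
  choose p hdeg hfun using hmat
  have hpsym : ∀ i j : Fin 3, p i j = p j i := by
    intro i j
    apply MvPolynomial.funext
    intro x
    have h1 := congrFun (hfun i j) x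
    have h2 := congrFun (hfun j i) x
    rw [← h1, ← h2]
    have := congrFun (congrFun (congrArg (fun M => M) (hsymm x)) j) i
    calc τ x i j = (τ x)ᵀ j i := rfl
    _ = τ x j i := by rw [hsymm x]
  have pull : ∀ (c : Prop) [Decidable c] (f : Fin 3 → ℝ),
      (∑ j, if c then f j else 0) = if c then ∑ j, f j else 0 := by
    intro c _ f; split_ifs <;> simp
  have expand : ∀ (x : V3) (a : Fin 3), (∑ i, ∑ j, Gfun (p i j) i j) x a
      = (∑ j, MvPolynomial.eval x (p a j) * x j)
        + (∑ i, MvPolynomial.eval x (p i a) * x i) := by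
    intro x a
    simp only [Finset.sum_apply, Gfun, Pi.smul_apply, Pi.add_apply, Pi.single_apply,
      smul_eq_mul, mul_add, mul_ite, mul_zero, Finset.sum_add_distrib]
    congr 1
    · rw [Finset.sum_congr rfl fun i _ => pull (a = i) _]
      rw [Finset.sum_ite_eq Finset.univ a]
      simp
    · rw [Finset.sum_congr rfl fun i _ => Finset.sum_ite_eq Finset.univ a
        (fun j => MvPolynomial.eval x (p i j) * x i)]
      simp
  have key : (fun x => (τ x).mulVec x) = (2⁻¹ : ℝ) • ∑ i, ∑ j, Gfun (p i j) i j := by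
    funext x a
    have hmv : (τ x).mulVec x a = ∑ j, MvPolynomial.eval x (p a j) * x j := by
      simp only [Matrix.mulVec, dotProduct]
      refine Finset.sum_congr rfl fun j _ => ?_
      rw [congrFun (hfun a j) x]
    simp only [Pi.smul_apply, smul_eq_mul]
    rw [expand x a, hmv]
    have hsecond : (∑ i, MvPolynomial.eval x (p i a) * x i)
        = ∑ j, MvPolynomial.eval x (p a j) * x j := by
      refine Finset.sum_congr rfl fun i _ => ?_
      rw [hpsym i a]
    rw [hsecond]
    ring
  rw [key]
  exact Submodule.smul_mem _ _ (Submodule.sum_mem _ fun i _ => Submodule.sum_mem _ fun j _ =>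
    Gfun_mem_spanB k (p i j) (fun D hD => by exact_mod_cast hdeg i j D hD) i j)

lemma spanS_eq_spanB (k : ℕ) : spanS k = spanB k :=
  le_antisymm (Submodule.span_le.2 (SetS_subset_spanB k)) (spanB_le_spanS k)

/-! ### linear independence -/

abbrev P3 : Type := Fin 3 → MvPolynomial (Fin 3) ℝ

def evalL3 : P3 →ₗ[ℝ] (V3 → V3) where
  toFun p := fun x a => MvPolynomial.eval x (p a)
  map_add' p q := by funext x a; simp
  map_smul' c p := by
    funext x a
    simp [MvPolynomial.smul_eq_C_mul]

lemma evalL3_inj : LinearMap.ker evalL3 = ⊥ := by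
  rw [LinearMap.ker_eq_bot']
  intro p hp
  funext a
  apply MvPolynomial.funext
  intro x
  have := congrFun (congrFun hp x) a
  simpa [evalL3] using this

def Bp (k : ℕ) : Idx k → P3
  | .inl (⟨_, d⟩, i) => Pi.single i (MvPolynomial.monomial (fsp d.1) (1:ℝ))
  | .inr p => Pi.single p.1.1 (MvPolynomial.X p.1.2) + Pi.single p.1.2 (MvPolynomial.X p.1.1)

lemma single_apply_P3 (i a : Fin 3) (q : MvPolynomial (Fin 3) ℝ) :
    (Pi.single i q : P3) a = if a = i then q else 0 := Pi.single_apply i q a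

lemma coeff_single_apply (a i : Fin 3) (q : MvPolynomial (Fin 3) ℝ) (D : Fin 3 →₀ ℕ) :
    MvPolynomial.coeff D ((Pi.single i q : P3) a)
      = if a = i then MvPolynomial.coeff D q else 0 := by
  rw [single_apply_P3]
  split_ifs <;> simp

lemma bfun_eq_comp (k : ℕ) : bfun k = ⇑evalL3 ∘ Bp k := by
  funext t
  rcases t with ⟨⟨n, d⟩, i⟩ | p
  · funext x a
    show vmono d.1 i x a = MvPolynomial.eval x (Bp k (Sum.inl (⟨n, d⟩, i)) a)
    simp only [Bp, single_apply_P3]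
    rw [apply_ite (MvPolynomial.eval x), eval_monomial_fsp, map_zero, one_mul]
    simp [vmono, Pi.single_apply]
  · funext x a
    show Fm 0 p.1.1 p.1.2 x a = MvPolynomial.eval x (Bp k (Sum.inr p) a)
    simp only [Bp, Pi.add_apply, single_apply_P3, map_add]
    rw [apply_ite (MvPolynomial.eval x) (a = (p : Fin 3 × Fin 3).1),
      apply_ite (MvPolynomial.eval x) (a = (p : Fin 3 × Fin 3).2)]
    simp [Fm, mono, Pi.single_apply, MvPolynomial.eval_X]

lemma sum_fsp (d : Fin 3 → ℕ) : ∑ t, fsp d t = ∑ t, d t := rfl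

lemma sum_single_one (j : Fin 3) : ∑ t, Finsupp.single j (1:ℕ) t = 1 := by
  simp [Finsupp.single_apply, Finset.sum_ite_eq Finset.univ j]

lemma fsp_inj {d d' : Fin 3 → ℕ} (h : fsp d = fsp d') : d = d' := by
  funext t
  rw [← fsp_apply d t, h, fsp_apply]

lemma single_one_ne_fsp {m : Fin 3} {n : ℕ} {d : Slice (n + 2)} :
    ¬ (Finsupp.single m 1 = fsp d.1) := by
  intro hm
  have h1 := congrArg (fun F : Fin 3 →₀ ℕ => ∑ t, F t) hm
  rw [sum_single_one, sum_fsp] at h1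
  have := d.2
  omega

lemma Bp_indep (k : ℕ) : LinearIndependent ℝ (Bp k) := by
  rw [Fintype.linearIndependent_iff]
  intro g hsum t₀
  obtain ⟨a, D, hz, hnz⟩ : ∃ (a : Fin 3) (D : Fin 3 →₀ ℕ),
      (∀ t, t ≠ t₀ → MvPolynomial.coeff D (Bp k t a) = 0) ∧
        MvPolynomial.coeff D (Bp k t₀ a) ≠ 0 := by
    rcases t₀ with ⟨⟨n₀, d₀⟩, i₀⟩ | ⟨⟨i₀, j₀⟩, hle₀⟩
    · refine ⟨i₀, fsp d₀.1, fun t ht => ?_, ?_⟩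
      · rcases t with ⟨⟨n, d⟩, i⟩ | ⟨⟨i, j⟩, hle⟩
        · simp only [Bp, coeff_single_apply, MvPolynomial.coeff_monomial]
          split_ifs with h1 h2
          · exfalso
            apply ht
            have hd : d.1 = d₀.1 := fsp_inj h2
            have hn : n = n₀ := by
              have e1 := d.2; have e2 := d₀.2
              rw [hd] at e1
              exact Fin.ext (by omega)
            subst hn h1
            have hdd : d = d₀ := Subtype.ext hd
            rw [hdd]
          · rfl
          · rfl
        · simp only [Bp, Pi.add_apply, MvPolynomial.coeff_add, coeff_single_apply,
            MvPolynomial.coeff_X']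
          simp [single_one_ne_fsp (d := d₀)]
      · simp only [Bp, coeff_single_apply, MvPolynomial.coeff_monomial, if_pos rfl]
        norm_num
    · refine ⟨i₀, Finsupp.single j₀ 1, fun t ht => ?_, ?_⟩
      · rcases t with ⟨⟨n, d⟩, i⟩ | ⟨⟨i, j⟩, hle⟩
        · simp only [Bp, coeff_single_apply, MvPolynomial.coeff_monomial]
          have : ¬ (fsp d.1 = Finsupp.single j₀ 1) :=
            fun h => single_one_ne_fsp (d := d) h.symm
          simp [this]
        · simp only [Bp, Pi.add_apply, MvPolynomial.coeff_add, coeff_single_apply,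
            MvPolynomial.coeff_X',
            Finsupp.single_left_inj (one_ne_zero : (1:ℕ) ≠ 0)]
          have hij : i = i₀ ∧ j = j₀ → False := by
            rintro ⟨rfl, rfl⟩
            exact ht (congrArg Sum.inr (Subtype.ext rfl))
          have e1 : (if i₀ = i then (if j = j₀ then (1:ℝ) else 0) else 0) = 0 := by
            by_cases h1 : i₀ = i
            · by_cases h2 : j = j₀
              · exact absurd ⟨h1.symm, h2⟩ hij
              · simp [h1, h2]
            · simp [h1]
          have e2 : (if i₀ = j then (if i = j₀ then (1:ℝ) else 0) else 0) = 0 := by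
            by_cases h3 : i₀ = j
            · by_cases h4 : i = j₀
              · refine absurd ?_ hij
                simp only [Fin.le_def] at hle hle₀
                simp only [Fin.ext_iff] at h3 h4 ⊢
                omega
              · simp [h3, h4]
            · simp [h3]
          rw [e1, e2, add_zero]
      · simp only [Bp, Pi.add_apply, MvPolynomial.coeff_add, coeff_single_apply,
          MvPolynomial.coeff_X',
          Finsupp.single_left_inj (one_ne_zero : (1:ℕ) ≠ 0), if_pos rfl]
        split_ifs <;> norm_num
  have happ : ∑ t, g t * MvPolynomial.coeff D (Bp k t a) = 0 := by
    have h1 := congrArg (fun p : P3 => MvPolynomial.coeff D (p a)) hsum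
    simp only [Finset.sum_apply, Pi.smul_apply, Pi.zero_apply,
      MvPolynomial.coeff_sum, MvPolynomial.coeff_smul, smul_eq_mul,
      MvPolynomial.coeff_zero] at h1
    exact h1
  rw [Finset.sum_eq_single t₀ (fun t _ ht => by rw [hz t ht, mul_zero])
    (fun h => absurd (Finset.mem_univ t₀) h)] at happ
  exact (mul_eq_zero.1 happ).resolve_right hnz

lemma two_mul_choose_two : ∀ n : ℕ, 2 * ((n+1).choose 2) = (n+1) * n := by
  intro n
  induction n with
  | zero => rfl
  | succ m ih =>
    have h : (m+2).choose 2 = (m+1).choose 1 + (m+1).choose 2 := Nat.choose_succ_succ' (m+1) 1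
    rw [h, Nat.choose_one_right, Nat.mul_add, ih]
    ring

lemma six_mul_choose_three : ∀ n : ℕ, 6 * ((n+2).choose 3) = (n+2) * (n+1) * n := by
  intro n
  induction n with
  | zero => rfl
  | succ m ih =>
    have h : (m+3).choose 3 = (m+2).choose 2 + (m+2).choose 3 := Nat.choose_succ_succ' (m+2) 2
    have h2 := two_mul_choose_two (m+1)
    rw [h, Nat.mul_add, ih]
    calc 6 * ((m+2).choose 2) + (m+2)*(m+1)*m
        = 3 * (2 * ((m+2).choose 2)) + (m+2)*(m+1)*m := by ring
      _ = 3 * ((m+2)*(m+1)) + (m+2)*(m+1)*m := by rw [h2]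
      _ = (m+3)*(m+2)*(m+1) := by ring

lemma sum_choose_aux : ∀ k : ℕ, (∑ n ∈ Finset.range k, (n+4).choose 2) + 4 = (k+4).choose 3 := by
  intro k
  induction k with
  | zero => rfl
  | succ m ih =>
    rw [Finset.sum_range_succ]
    have h : (m+5).choose 3 = (m+4).choose 2 + (m+4).choose 3 := Nat.choose_succ_succ' (m+4) 2
    have h5 : m + 1 + 4 = m + 5 := by omega
    rw [h5, h]
    omega

lemma card_idx (k : ℕ) : Fintype.card (Idx k) = (k + 4) * (k + 3) * (k + 2) / 2 - 6 := by
  have h1 : Fintype.card (Idx k)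
      = (∑ n : Fin k, Fintype.card (Slice (n + 2))) * 3 + 6 := by
    unfold Idx
    rw [Fintype.card_sum, Fintype.card_prod, Fintype.card_sigma]
    have hc : Fintype.card {p : Fin 3 × Fin 3 // p.1 ≤ p.2} = 6 := by decide
    rw [hc, Fintype.card_fin]
  have h2 : (∑ n : Fin k, Fintype.card (Slice (n + 2)))
      = ∑ n ∈ Finset.range k, (n+4).choose 2 := by
    rw [Fin.sum_univ_eq_sum_range (fun n => Fintype.card (Slice (n + 2)))]
    refine Finset.sum_congr rfl fun n _ => ?_
    rw [card_slice]
  have h3 := sum_choose_aux k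
  have h4 := six_mul_choose_three (k + 2)
  rw [h1, h2]
  have h6 : k + 2 + 2 = k + 4 := by omega
  have h5 : (k + 2 + 2) * (k + 2 + 1) * (k + 2) = (k+4)*(k+3)*(k+2) := by ring
  rw [h6, h5] at h4
  omega


end Stmt8

/-- the subspace `{x ↦ τ(x)·x : τ ∈ P_k(ℝ³;𝕊)}` of `P_{k+1}(ℝ³;ℝ³)`
has dimension `(k+4)(k+3)(k+2)/2 − 6`. -/
theorem stmt_8 (k : ℕ) :
    Module.finrank ℝ
      (Submodule.span ℝ
        {f : V3 → V3 | ∃ τ : V3 → M3, PolySym k τ ∧ f = fun x => (τ x).mulVec x})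
      = (k + 4) * (k + 3) * (k + 2) / 2 - 6 := by
  have hind : LinearIndependent ℝ (⇑Stmt8.evalL3 ∘ Stmt8.Bp k) :=
    (Stmt8.Bp_indep k).map' Stmt8.evalL3 Stmt8.evalL3_inj
  have h0 : Submodule.span ℝ
      {f : V3 → V3 | ∃ τ : V3 → M3, PolySym (k:ℤ) τ ∧ f = fun x => (τ x).mulVec x}
      = Stmt8.spanB k := Stmt8.spanS_eq_spanB k
  have h1 : Stmt8.spanB k = Submodule.span ℝ (Set.range (⇑Stmt8.evalL3 ∘ Stmt8.Bp k)) := by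
    rw [Stmt8.spanB, Stmt8.bfun_eq_comp k]
  rw [h0, h1, finrank_span_eq_card hind, Stmt8.card_idx k]
end
end

section
/- For every integer k ≥ 0, the space P_{k+1}(ℝ³;ℝ³) is the internal direct sum of the subspace { x ↦ τ(x)·x : τ ∈ P_k(ℝ³;𝕊) } and the subspace RM; that is, these two subspaces intersect only in 0 and together span P_{k+1}(ℝ³;ℝ³). -/
open Matrix

noncomputable section

namespace Stmt9Aux
open MvPolynomial

lemma sum_eq (d : Fin 3 →₀ ℕ) : (∑ i, d i) = d.sum fun _ e => e :=
  (Finsupp.sum_fintype d (fun _ e => e) (fun _ => rfl)).symm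

lemma polyDeg_iff (m : ℕ) (f : V3 → ℝ) :
    PolyDeg m f ↔ ∃ p : MvPolynomial (Fin 3) ℝ,
      p.totalDegree ≤ m ∧ f = fun x => MvPolynomial.eval x p := by
  constructor
  · rintro ⟨p, hp, rfl⟩
    refine ⟨p, Finset.sup_le fun d hd => ?_, rfl⟩
    have := hp d hd
    rw [← sum_eq]
    exact_mod_cast this
  · rintro ⟨p, hp, rfl⟩
    refine ⟨p, fun d hd => ?_, rfl⟩
    have h := le_trans (le_totalDegree hd) hp
    rw [← sum_eq] at h
    exact_mod_cast h

lemma euler_monomial (s : Fin 3 →₀ ℕ) (a : ℝ) :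
    ∑ j, X j * pderiv j (monomial s a) = (∑ j, s j) • monomial s a := by
  have h : ∀ j : Fin 3, X j * pderiv j (monomial s a) = monomial s (a * s j) := by
    intro j
    rw [pderiv_monomial]
    rcases Nat.eq_zero_or_pos (s j) with h0 | h0
    · simp [h0]
    · have hs : Finsupp.single j 1 + (s - Finsupp.single j 1) = s := by
        refine Finsupp.ext fun t => ?_
        rcases eq_or_ne t j with rfl | hne
        · simp [Finsupp.add_apply, Finsupp.single_apply, Finsupp.tsub_apply]
          omega
        · simp [Finsupp.single_apply, Finsupp.tsub_apply, hne, Ne.symm hne]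
      rw [X, monomial_mul, one_mul, hs]
  simp_rw [h]
  rw [← map_sum (monomial s) (fun j => a * s j) Finset.univ, ← Finset.mul_sum]
  rw [smul_monomial, nsmul_eq_mul]
  congr 1
  push_cast
  ring

lemma sub_single_sum (i : Fin 3) (d : Fin 3 →₀ ℕ) (h : d i ≠ 0) :
    ∑ j : Fin 3, (d - Finsupp.single i 1 : Fin 3 →₀ ℕ) j = (∑ j, d j) - 1 := by
  rw [Fin.sum_univ_three, Fin.sum_univ_three]
  fin_cases i <;>
    simp only [Finsupp.tsub_apply, Finsupp.single_apply] <;> simp_all <;> omega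

lemma totalDegree_monomial_le' (s : Fin 3 →₀ ℕ) (c : ℝ) :
    (monomial s c).totalDegree ≤ ∑ j, s j := by
  rw [sum_eq]
  exact totalDegree_monomial_le s c

lemma totalDegree_pderiv_monomial_le (i : Fin 3) (s : Fin 3 →₀ ℕ) (a : ℝ) :
    (pderiv i (monomial s a)).totalDegree ≤ (∑ j, s j) - 1 := by
  rw [pderiv_monomial]
  rcases Nat.eq_zero_or_pos (s i) with h0 | h0
  · simp [h0]
  · refine le_trans (totalDegree_monomial_le' _ _) ?_
    rw [sub_single_sum i s (by omega)]

lemma pderiv_comm' (i j : Fin 3) (d : Fin 3 →₀ ℕ) (c : ℝ) :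
    pderiv i (pderiv j (monomial d c)) = pderiv j (pderiv i (monomial d c)) := by
  rcases eq_or_ne i j with rfl | hne
  · rfl
  · simp only [pderiv_monomial]
    rw [tsub_right_comm]
    have h1 : ((d - Finsupp.single j 1 : Fin 3 →₀ ℕ) i) = d i := by
      simp [Finsupp.tsub_apply, Finsupp.single_apply, hne, Ne.symm hne]
    have h2 : ((d - Finsupp.single i 1 : Fin 3 →₀ ℕ) j) = d j := by
      simp [Finsupp.tsub_apply, Finsupp.single_apply, hne, Ne.symm hne]
    rw [h1, h2]
    congr 1
    ring

lemma totalDegree_pderiv2_le (i j : Fin 3) (d : Fin 3 →₀ ℕ) (c : ℝ) :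
    (pderiv j (pderiv i (monomial d c))).totalDegree ≤ (∑ l, d l) - 2 := by
  rcases Nat.eq_zero_or_pos (d i) with h0 | h0
  · simp [pderiv_monomial, h0]
  · rw [pderiv_monomial]
    refine le_trans (totalDegree_pderiv_monomial_le _ _ _) ?_
    rw [sub_single_sum i d (by omega)]
    omega

lemma monomial_mem_tau (k : ℕ) (d : Fin 3 →₀ ℕ) (c : ℝ) (r : Fin 3)
    (h2 : 2 ≤ ∑ j, d j) (hk : (∑ j, d j) ≤ k + 1) :
    ∃ τ : V3 → M3, PolySym (k : ℤ) τ ∧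
      (fun x => MvPolynomial.eval x (monomial d c) • (Pi.single r 1 : V3)) =
        fun x => (τ x).mulVec x := by
  set m : ℕ := ∑ j, d j with hm
  set q : MvPolynomial (Fin 3) ℝ := monomial d c with hq
  set μ : ℝ := (m : ℝ) with hmu
  have hμ2 : (2:ℝ) ≤ μ := by rw [hmu]; exact_mod_cast h2
  have hμ : μ * (μ - 1) ≠ 0 := by nlinarith
  set σ : Fin 3 → Fin 3 → MvPolynomial (Fin 3) ℝ := fun i j =>
    C ((μ * (μ - 1))⁻¹) * (C (μ - 1) *
      ((if j = r then pderiv i q else 0) + (if i = r then pderiv j q else 0))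
      - X r * pderiv j (pderiv i q)) with hσ
  have hsym : ∀ i j, σ i j = σ j i := by
    intro i j
    simp only [hσ]
    rw [pderiv_comm' j i d c]
    ring
  have hdeg : ∀ i j, (σ i j).totalDegree ≤ k := by
    intro i j
    refine le_trans (totalDegree_mul _ _) ?_
    rw [totalDegree_C, zero_add]
    refine le_trans (totalDegree_sub _ _) ?_
    have hS : ((if j = r then pderiv i q else 0) +
        (if i = r then pderiv j q else 0)).totalDegree ≤ m - 1 := by
      refine le_trans (totalDegree_add _ _) ?_
      rw [max_le_iff]
      constructor <;> split_ifs <;>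
        first
          | simp
          | exact totalDegree_pderiv_monomial_le _ d c
    have hCS : (C (μ - 1) * ((if j = r then pderiv i q else 0) +
        (if i = r then pderiv j q else 0))).totalDegree ≤ m - 1 := by
      refine le_trans (totalDegree_mul _ _) ?_
      rw [totalDegree_C, zero_add]
      exact hS
    have hD : (X r * pderiv j (pderiv i q)).totalDegree ≤ 1 + (m - 2) := by
      refine le_trans (totalDegree_mul _ _) ?_
      rw [totalDegree_X]
      have h : ((pderiv j) ((pderiv i) q)).totalDegree ≤ m - 2 :=
        totalDegree_pderiv2_le i j d c
      omega
    have hm2 : 2 ≤ m := h2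
    have hmk : m ≤ k + 1 := hk
    rw [max_le_iff]
    constructor <;> omega
  have key : ∀ i : Fin 3, ∑ j, σ i j * X j = if i = r then q else 0 := by
    intro i
    have he1 : ∑ j, (if j = r then pderiv i q else 0) * X j = pderiv i q * X r := by
      have hstep : ∀ j : Fin 3, (if j = r then pderiv i q else 0) * X j =
          (if j = r then pderiv i q * X r else 0) := by
        intro j; split_ifs with h
        · subst h; rfl
        · simp
      simp_rw [hstep]
      simp
    have he2 : ∑ j, (if i = r then pderiv j q else 0) * X j =
        if i = r then C μ * q else 0 := by
      split_ifs with h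
      · calc ∑ j, pderiv j q * X j = ∑ j, X j * pderiv j q := by
              exact Finset.sum_congr rfl fun j _ => mul_comm _ _
          _ = m • q := euler_monomial d c
          _ = C μ * q := by rw [← smul_eq_C_mul, hmu, Nat.cast_smul_eq_nsmul]
      · simp
    have he3 : X r * ∑ j, X j * pderiv j (pderiv i q) = C (μ - 1) * (pderiv i q * X r) := by
      rw [hq, pderiv_monomial, euler_monomial]
      rcases Nat.eq_zero_or_pos (d i) with h0 | h0
      · simp [h0]
      · rw [sub_single_sum i d (by omega)]
        have hcast : ((m - 1 : ℕ) : ℝ) = μ - 1 := by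
          rw [hmu, Nat.cast_sub (by omega : 1 ≤ m)]
          norm_num
        have hsm : ((m - 1 : ℕ)) • (monomial (d - Finsupp.single i 1) (c * d i) :
            MvPolynomial (Fin 3) ℝ) = C (μ - 1) * monomial (d - Finsupp.single i 1) (c * d i) := by
          rw [← hcast, ← smul_eq_C_mul, Nat.cast_smul_eq_nsmul]
        rw [hsm]
        ring
    have expand : ∑ j, σ i j * X j = C ((μ*(μ-1))⁻¹) * (C (μ-1) *
        ((∑ j, (if j = r then pderiv i q else 0) * X j) +
          ∑ j, (if i = r then pderiv j q else 0) * X j)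
        - X r * ∑ j, X j * pderiv j (pderiv i q)) := by
      symm
      rw [← Finset.sum_add_distrib, Finset.mul_sum, Finset.mul_sum, ← Finset.sum_sub_distrib,
        Finset.mul_sum]
      exact Finset.sum_congr rfl fun j _ => by simp only [hσ]; ring
    rw [expand, he1, he2, he3]
    split_ifs with h
    · have hb : C (μ-1) * (pderiv i q * X r + C μ * q) - C (μ-1) * (pderiv i q * X r)
          = C (μ-1) * (C μ * q) := by ring
      rw [hb, ← mul_assoc, ← C_mul, ← mul_assoc, ← C_mul]
      have hone : (μ*(μ-1))⁻¹ * (μ - 1) * μ = 1 := by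
          rw [mul_assoc, mul_comm (μ-1) μ, inv_mul_cancel₀ hμ]
      rw [hone]
      simp
    · have hb : C (μ-1) * (pderiv i q * X r + 0) - C (μ-1) * (pderiv i q * X r) = 0 := by ring
      rw [hb, mul_zero]
  refine ⟨fun x => Matrix.of fun i j => MvPolynomial.eval x (σ i j), ⟨?_, ?_⟩, ?_⟩
  · intro i j
    exact (polyDeg_iff k _).mpr ⟨σ i j, hdeg i j, rfl⟩
  · intro x
    ext i j
    simp only [Matrix.transpose_apply, Matrix.of_apply]
    rw [hsym]
  · funext x
    funext i
    simp only [Matrix.mulVec, dotProduct, Matrix.of_apply, Pi.smul_apply]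
    have : ∑ j, MvPolynomial.eval x (σ i j) * x j = MvPolynomial.eval x (∑ j, σ i j * X j) := by
      rw [map_sum]
      exact Finset.sum_congr rfl fun j _ => by simp
    rw [this, key i]
    rw [Pi.single_apply]
    split_ifs <;> simp

lemma vcross_add_left (a a' x : V3) : vcross (a + a') x = vcross a x + vcross a' x := by
  funext i
  simp only [vcross, Pi.add_apply, add_mul, mul_add, Finset.sum_add_distrib]

lemma vcross_smul_left (c : ℝ) (a x : V3) : vcross (c • a) x = c • vcross a x := by
  funext i
  simp only [vcross, Pi.smul_apply, smul_eq_mul, Finset.mul_sum]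
  exact Finset.sum_congr rfl fun kk _ => Finset.sum_congr rfl fun l _ => by ring

lemma vcross_zero_left (x : V3) : vcross 0 x = 0 := by
  funext i
  simp [vcross]

lemma polyDeg_add {m : ℕ} {f g : V3 → ℝ} (hf : PolyDeg m f) (hg : PolyDeg m g) :
    PolyDeg m (fun x => f x + g x) := by
  rw [polyDeg_iff] at hf hg ⊢
  obtain ⟨p, hp, rfl⟩ := hf
  obtain ⟨p', hp', rfl⟩ := hg
  exact ⟨p + p', le_trans (totalDegree_add _ _) (max_le hp hp'), by funext x; simp⟩

lemma polyDeg_smul {m : ℕ} (c : ℝ) {f : V3 → ℝ} (hf : PolyDeg m f) :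
    PolyDeg m (fun x => c * f x) := by
  rw [polyDeg_iff] at hf ⊢
  obtain ⟨p, hp, rfl⟩ := hf
  refine ⟨C c * p, le_trans (totalDegree_mul _ _) ?_, by funext x; simp⟩
  simp [totalDegree_C, hp]

lemma polyDeg_zero (m : ℕ) : PolyDeg m (fun _ : V3 => (0:ℝ)) :=
  ⟨0, by simp, by funext x; simp⟩

def S1 (k : ℕ) : Submodule ℝ (V3 → V3) where
  carrier := {f : V3 → V3 | ∃ τ : V3 → M3, PolySym (k:ℤ) τ ∧ f = fun x => (τ x).mulVec x}
  zero_mem' := by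
    refine ⟨fun _ => 0, ⟨fun i j => ?_, fun x => by simp⟩, by funext x; simp⟩
    simpa using polyDeg_zero k
  add_mem' := by
    rintro f g ⟨τ, ⟨hτm, hτs⟩, rfl⟩ ⟨τ', ⟨hτ'm, hτ's⟩, rfl⟩
    refine ⟨fun x => τ x + τ' x, ⟨fun i j => ?_, fun x => ?_⟩, ?_⟩
    · simpa using polyDeg_add (hτm i j) (hτ'm i j)
    · rw [Matrix.transpose_add, hτs, hτ's]
    · funext x
      simp [Matrix.add_mulVec]
  smul_mem' := by
    rintro c f ⟨τ, ⟨hτm, hτs⟩, rfl⟩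
    refine ⟨fun x => c • τ x, ⟨fun i j => ?_, fun x => ?_⟩, ?_⟩
    · simpa [Matrix.smul_apply, smul_eq_mul] using polyDeg_smul c (hτm i j)
    · rw [Matrix.transpose_smul, hτs]
    · funext x
      simp [Matrix.smul_mulVec]

def S2 : Submodule ℝ (V3 → V3) where
  carrier := {f : V3 → V3 | ∃ a b : V3, f = fun x => vcross a x + b}
  zero_mem' := ⟨0, 0, by funext x; simp [vcross_zero_left]⟩
  add_mem' := by
    rintro f g ⟨a, b, rfl⟩ ⟨a', b', rfl⟩
    refine ⟨a + a', b + b', ?_⟩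
    funext x
    simp only [Pi.add_apply, vcross_add_left]
    abel
  smul_mem' := by
    rintro c f ⟨a, b, rfl⟩
    refine ⟨c • a, c • b, ?_⟩
    funext x
    simp only [Pi.smul_apply, vcross_smul_left, smul_add]

lemma span_set1 (k : ℕ) :
    Submodule.span ℝ
        {f : V3 → V3 | ∃ τ : V3 → M3, PolySym (k:ℤ) τ ∧ f = fun x => (τ x).mulVec x} = S1 k :=
  Submodule.span_eq (S1 k)

lemma span_set2 :
    Submodule.span ℝ {f : V3 → V3 | ∃ a b : V3, f = fun x => vcross a x + b} = S2 :=
  Submodule.span_eq S2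

set_option maxHeartbeats 1000000 in
lemma deg_one_decomp (c : ℝ) (s r : Fin 3) :
    ∃ (τ : M3) (a : V3), τᵀ = τ ∧
      ∀ x : V3, (c * x s) • (Pi.single r 1 : V3) = τ.mulVec x + vcross a x := by
  refine ⟨Matrix.of fun i j =>
      (c/2) * ((if i = r ∧ j = s then (1:ℝ) else 0) + (if i = s ∧ j = r then 1 else 0)),
    fun kk => (c/2) * eps kk s r, ?_, ?_⟩
  · ext i j
    simp only [Matrix.transpose_apply, Matrix.of_apply]
    have h1 : (if (j = r ∧ i = s) then (1:ℝ) else 0) = (if (i = s ∧ j = r) then (1:ℝ) else 0) := by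
      simp only [and_comm]
    have h2 : (if (j = s ∧ i = r) then (1:ℝ) else 0) = (if (i = r ∧ j = s) then (1:ℝ) else 0) := by
      simp only [and_comm]
    rw [h1, h2]
    ring
  · intro x
    funext i
    simp only [Matrix.mulVec, dotProduct, Matrix.of_apply, Pi.smul_apply, smul_eq_mul,
      vcross, Pi.add_apply, Fin.sum_univ_three]
    fin_cases i <;> fin_cases s <;> fin_cases r <;>
      simp [eps, Pi.single_apply] <;> first | ring1 | exact Or.inl (by ring)

lemma eq_single_of_sum_one (d : Fin 3 →₀ ℕ) (h : ∑ j, d j = 1) :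
    ∃ s, d = Finsupp.single s 1 := by
  rw [Fin.sum_univ_three] at h
  have h3 : (d 0 = 1 ∧ d 1 = 0 ∧ d 2 = 0) ∨ (d 0 = 0 ∧ d 1 = 1 ∧ d 2 = 0) ∨
      (d 0 = 0 ∧ d 1 = 0 ∧ d 2 = 1) := by omega
  rcases h3 with ⟨h1, h2, h3⟩ | ⟨h1, h2, h3⟩ | ⟨h1, h2, h3⟩
  · exact ⟨0, Finsupp.ext fun j => by fin_cases j <;> simp [Finsupp.single_apply, h1, h2, h3]⟩
  · exact ⟨1, Finsupp.ext fun j => by fin_cases j <;> simp [Finsupp.single_apply, h1, h2, h3]⟩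
  · exact ⟨2, Finsupp.ext fun j => by fin_cases j <;> simp [Finsupp.single_apply, h1, h2, h3]⟩

lemma monomial_vec_mem (k : ℕ) (d : Fin 3 →₀ ℕ) (c : ℝ) (r : Fin 3)
    (hd : ∑ j, d j ≤ k + 1) :
    (fun x : V3 => MvPolynomial.eval x (monomial d c) • (Pi.single r 1 : V3)) ∈
      Submodule.span ℝ
          {f : V3 → V3 | ∃ τ : V3 → M3, PolySym (k:ℤ) τ ∧ f = fun x => (τ x).mulVec x} ⊔
        Submodule.span ℝ {f : V3 → V3 | ∃ a b : V3, f = fun x => vcross a x + b} := by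
  rcases Nat.lt_or_ge (∑ j, d j) 2 with hlt | hge
  · rcases (by omega : ∑ j, d j = 0 ∨ ∑ j, d j = 1) with h0 | h1
    · have hd0 : d = 0 := by
        refine Finsupp.ext fun j => ?_
        have := Finset.sum_eq_zero_iff.mp h0 j (Finset.mem_univ j)
        simpa using this
      subst hd0
      refine Submodule.mem_sup_right (Submodule.subset_span ?_)
      refine ⟨0, c • (Pi.single r 1 : V3), ?_⟩
      funext x
      simp [vcross_zero_left, MvPolynomial.eval_monomial]
    · obtain ⟨s, rfl⟩ := eq_single_of_sum_one d h1
      obtain ⟨τ0, a, hτ0, hsum⟩ := deg_one_decomp c s r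
      have hf : (fun x : V3 => MvPolynomial.eval x (monomial (Finsupp.single s 1) c) •
            (Pi.single r 1 : V3))
          = (fun x : V3 => ((fun _ : V3 => τ0) x).mulVec x) + fun x => vcross a x + 0 := by
        funext x
        have he : MvPolynomial.eval x (monomial (Finsupp.single s 1) c) = c * x s := by
          simp [MvPolynomial.eval_monomial]
        rw [Pi.add_apply, he]
        rw [hsum x]
        simp
      rw [hf]
      refine Submodule.add_mem _ (Submodule.mem_sup_left (Submodule.subset_span ?_))
        (Submodule.mem_sup_right (Submodule.subset_span ⟨a, 0, rfl⟩))
      refine ⟨fun _ => τ0, ⟨fun i j => ?_, fun x => hτ0⟩, rfl⟩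
      exact (polyDeg_iff k _).mpr ⟨C (τ0 i j), by simp, by funext x; simp⟩
  · obtain ⟨τ, hτ, heq⟩ := monomial_mem_tau k d c r hge hd
    exact Submodule.mem_sup_left (Submodule.subset_span ⟨τ, hτ, heq⟩)

lemma cast_k1 (k : ℕ) : ((k+1 : ℕ) : ℤ) = (k:ℤ)+1 := by push_cast; ring

lemma span_polyvec_le (k : ℕ) :
    Submodule.span ℝ {f : V3 → V3 | PolyVec ((k:ℤ)+1) f} ≤
      Submodule.span ℝ
          {f : V3 → V3 | ∃ τ : V3 → M3, PolySym (k:ℤ) τ ∧ f = fun x => (τ x).mulVec x} ⊔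
        Submodule.span ℝ {f : V3 → V3 | ∃ a b : V3, f = fun x => vcross a x + b} := by
  rw [Submodule.span_le]
  intro f hf
  have hf' : ∀ i, PolyDeg ((k+1 : ℕ) : ℤ) fun x => f x i := by
    intro i
    rw [cast_k1]
    exact hf i
  choose p hdeg hfe using fun i => (polyDeg_iff (k+1) _).mp (hf' i)
  have hdecomp : f = ∑ r : Fin 3, ∑ d ∈ (p r).support,
      (fun x : V3 => MvPolynomial.eval x (monomial d (coeff d (p r))) •
        (Pi.single r 1 : V3)) := by
    funext x
    funext i
    have h1 : (∑ r : Fin 3, ∑ d ∈ (p r).support,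
        (fun x : V3 => MvPolynomial.eval x (monomial d (coeff d (p r))) •
          (Pi.single r 1 : V3))) x i
        = ∑ r : Fin 3, ∑ d ∈ (p r).support,
          MvPolynomial.eval x (monomial d (coeff d (p r))) * ((Pi.single r 1 : V3) i) := by
      rw [Finset.sum_apply, Finset.sum_apply]
      exact Finset.sum_congr rfl fun r _ => by
        rw [Finset.sum_apply, Finset.sum_apply]
        exact Finset.sum_congr rfl fun d _ => rfl
    rw [h1]
    have h2 : ∀ r : Fin 3, ∑ d ∈ (p r).support,
        MvPolynomial.eval x (monomial d (coeff d (p r))) * ((Pi.single r 1 : V3) i)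
        = MvPolynomial.eval x (p r) * ((Pi.single r 1 : V3) i) := by
      intro r
      rw [← Finset.sum_mul]
      congr 1
      rw [← map_sum, support_sum_monomial_coeff]
    simp_rw [h2]
    have h3 : ∀ r : Fin 3, MvPolynomial.eval x (p r) * ((Pi.single r 1 : V3) i)
        = if i = r then MvPolynomial.eval x (p r) else 0 := by
      intro r
      rw [Pi.single_apply]
      split_ifs <;> simp
    simp_rw [h3]
    rw [Finset.sum_ite_eq Finset.univ i fun r => MvPolynomial.eval x (p r),
      if_pos (Finset.mem_univ i)]
    exact congrFun (hfe i) x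
  rw [hdecomp]
  refine Submodule.sum_mem _ fun r _ => Submodule.sum_mem _ fun d hdmem =>
    monomial_vec_mem k d _ r ?_
  exact le_trans (sum_eq d ▸ le_totalDegree hdmem) (hdeg r)

lemma span_set1_le (k : ℕ) :
    Submodule.span ℝ
        {f : V3 → V3 | ∃ τ : V3 → M3, PolySym (k:ℤ) τ ∧ f = fun x => (τ x).mulVec x} ≤
      Submodule.span ℝ {f : V3 → V3 | PolyVec ((k:ℤ)+1) f} := by
  rw [Submodule.span_le]
  rintro f ⟨τ, ⟨hτm, _⟩, rfl⟩
  refine Submodule.subset_span ?_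
  intro i
  choose p hp hpe using fun i j => (polyDeg_iff k _).mp (hτm i j)
  rw [← cast_k1]
  refine (polyDeg_iff (k+1) _).mpr ⟨∑ j, p i j * X j, ?_, ?_⟩
  · refine le_trans (totalDegree_finset_sum _ _) ?_
    refine Finset.sup_le fun j _ => le_trans (totalDegree_mul _ _) ?_
    rw [totalDegree_X]
    have := hp i j
    omega
  · funext x
    rw [map_sum]
    simp only [Matrix.mulVec, dotProduct]
    exact Finset.sum_congr rfl fun j _ => by
      rw [eval_mul, eval_X, ← congrFun (hpe i j) x]

lemma span_set2_le (k : ℕ) :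
    Submodule.span ℝ {f : V3 → V3 | ∃ a b : V3, f = fun x => vcross a x + b} ≤
      Submodule.span ℝ {f : V3 → V3 | PolyVec ((k:ℤ)+1) f} := by
  rw [Submodule.span_le]
  rintro f ⟨a, b, rfl⟩
  refine Submodule.subset_span ?_
  intro i
  rw [← cast_k1]
  refine (polyDeg_iff (k+1) _).mpr
    ⟨C (b i) + ∑ l, C (∑ kk, eps i kk l * a kk) * X l, ?_, ?_⟩
  · refine le_trans (totalDegree_add _ _) ?_
    rw [max_le_iff, totalDegree_C]
    refine ⟨by omega, ?_⟩
    refine le_trans (totalDegree_finset_sum _ _) ?_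
    refine Finset.sup_le fun l _ => le_trans (totalDegree_mul _ _) ?_
    rw [totalDegree_C, totalDegree_X]
    omega
  · funext x
    show vcross a x i + b i =
      MvPolynomial.eval x (C (b i) + ∑ l, C (∑ kk, eps i kk l * a kk) * X l)
    have h1 : ∀ l : Fin 3, MvPolynomial.eval x (C (∑ kk, eps i kk l * a kk) * X l)
        = ∑ kk, eps i kk l * a kk * x l := by
      intro l
      rw [eval_mul, eval_C, eval_X, Finset.sum_mul]
    rw [map_add, map_sum, eval_C]
    simp_rw [h1]
    rw [Finset.sum_comm]
    rw [add_comm]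
    rfl

lemma inter_eq_bot (k : ℕ) : S1 k ⊓ S2 = ⊥ := by
  rw [eq_bot_iff]
  rintro f ⟨h1, h2⟩
  obtain ⟨τ, ⟨hτm, hτs⟩, rfl⟩ := h1
  obtain ⟨a, b, hab⟩ := h2
  choose p hp hpe using fun i j => (polyDeg_iff k _).mp (hτm i j)
  have hτsym : ∀ (x : V3) i j, τ x j i = τ x i j := by
    intro x i j
    have h := hτs x
    calc τ x j i = (τ x)ᵀ i j := rfl
      _ = τ x i j := by rw [h]
  have hpsym : ∀ i j, p i j = p j i := by
    intro i j
    refine MvPolynomial.funext fun x => ?_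
    calc MvPolynomial.eval x (p i j) = τ x i j := (congrFun (hpe i j) x).symm
      _ = τ x j i := (hτsym x i j).symm
      _ = MvPolynomial.eval x (p j i) := congrFun (hpe j i) x
  set P : Fin 3 → MvPolynomial (Fin 3) ℝ := fun i => ∑ j, p i j * X j with hP
  set Q : Fin 3 → MvPolynomial (Fin 3) ℝ := fun i =>
    C (b i) + ∑ l, C (∑ kk, eps i kk l * a kk) * X l with hQ
  have hPQ : ∀ i, P i = Q i := by
    intro i
    refine MvPolynomial.funext fun x => ?_
    have hl : MvPolynomial.eval x (P i) = ((τ x).mulVec x) i := by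
      rw [hP, map_sum]
      simp only [Matrix.mulVec, dotProduct]
      exact Finset.sum_congr rfl fun j _ => by
        rw [eval_mul, eval_X, ← congrFun (hpe i j) x]
    have hr : MvPolynomial.eval x (Q i) = vcross a x i + b i := by
      rw [hQ]
      have h1 : ∀ l : Fin 3, MvPolynomial.eval x (C (∑ kk, eps i kk l * a kk) * X l)
          = ∑ kk, eps i kk l * a kk * x l := by
        intro l
        rw [eval_mul, eval_C, eval_X, Finset.sum_mul]
      rw [map_add, map_sum, eval_C]
      simp_rw [h1]
      rw [Finset.sum_comm, add_comm]
      rfl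
    rw [hl, hr]
    have := congrFun hab x
    rw [this]
    rfl
  have hb : ∀ i, b i = 0 := by
    intro i
    have h0 := congrArg (coeff 0) (hPQ i)
    rw [hP, hQ] at h0
    rw [coeff_sum] at h0
    simp only [coeff_mul_X', Finsupp.support_zero, Finset.notMem_empty, if_false,
      Finset.sum_const_zero, coeff_add, coeff_zero_C, coeff_sum, coeff_C_mul] at h0
    have hX : ∀ l : Fin 3, coeff (0 : Fin 3 →₀ ℕ) (X l : MvPolynomial (Fin 3) ℝ) = 0 := by
      intro l
      rw [coeff_X']
      rw [if_neg]
      exact fun h => one_ne_zero (Finsupp.single_eq_zero.mp h)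
    simp only [hX, mul_zero, Finset.sum_const_zero, add_zero] at h0
    exact h0.symm
  have hcoefP : ∀ i j, coeff (Finsupp.single j 1) (P i) = coeff 0 (p i j) := by
    intro i j
    rw [hP, coeff_sum]
    rw [Finset.sum_eq_single j]
    · rw [coeff_mul_X', if_pos, tsub_self]
      rw [Finsupp.support_single_ne_zero j one_ne_zero]
      exact Finset.mem_singleton_self j
    · intro j' _ hne
      rw [coeff_mul_X', if_neg]
      rw [Finsupp.support_single_ne_zero j one_ne_zero]
      simpa using hne
    · intro h
      exact absurd (Finset.mem_univ j) h
  have hcoefQ : ∀ i j, coeff (Finsupp.single j 1) (Q i) = ∑ kk, eps i kk j * a kk := by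
    intro i j
    rw [hQ, coeff_add, coeff_C,
      if_neg (fun h => (one_ne_zero : (1:ℕ) ≠ 0) (Finsupp.single_eq_zero.mp h.symm)), coeff_sum]
    simp only [coeff_C_mul, coeff_X']
    rw [Finset.sum_eq_single j]
    · rw [if_pos rfl, mul_one, zero_add]
    · intro l _ hne
      rw [if_neg (fun h => hne (Finsupp.single_left_injective one_ne_zero h)), mul_zero]
    · intro h
      exact absurd (Finset.mem_univ j) h
  have hE : ∀ i j, (∑ kk, eps i kk j * a kk) = ∑ kk, eps j kk i * a kk := by
    intro i j
    rw [← hcoefQ i j, ← hcoefQ j i, ← hPQ, ← hPQ, hcoefP, hcoefP, hpsym]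
  have ha : a = 0 := by
    have e1 := hE 0 1
    have e2 := hE 0 2
    have e3 := hE 1 2
    rw [Fin.sum_univ_three, Fin.sum_univ_three] at e1 e2 e3
    norm_num [eps] at e1 e2 e3
    funext kk
    fin_cases kk
    · show a 0 = 0; linarith
    · show a 1 = 0; linarith
    · show a 2 = 0; linarith
  have hb0 : b = 0 := funext hb
  rw [Submodule.mem_bot, hab, ha, hb0]
  funext x
  simp [vcross_zero_left]

end Stmt9Aux

/-- `P_{k+1}(ℝ³;ℝ³) = {τ·x : τ ∈ P_k(ℝ³;𝕊)} ⊕ RM`. -/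
theorem stmt_9 (k : ℕ) :
    (Submodule.span ℝ
        {f : V3 → V3 | ∃ τ : V3 → M3, PolySym k τ ∧ f = fun x => (τ x).mulVec x}) ⊓
      (Submodule.span ℝ {f : V3 → V3 | ∃ a b : V3, f = fun x => vcross a x + b}) = ⊥ ∧
    (Submodule.span ℝ
        {f : V3 → V3 | ∃ τ : V3 → M3, PolySym k τ ∧ f = fun x => (τ x).mulVec x}) ⊔
      (Submodule.span ℝ {f : V3 → V3 | ∃ a b : V3, f = fun x => vcross a x + b})
      = Submodule.span ℝ {f : V3 → V3 | PolyVec ((k : ℤ) + 1) f} := by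
  constructor
  · rw [Stmt9Aux.span_set1, Stmt9Aux.span_set2]
    exact Stmt9Aux.inter_eq_bot k
  · exact le_antisymm (sup_le (Stmt9Aux.span_set1_le k) (Stmt9Aux.span_set2_le k))
      (Stmt9Aux.span_polyvec_le k)
end
end

section
/- Let n ∈ ℝ³ be a unit vector. For every twice continuously differentiable vector field v : ℝ³ → ℝ³, one has pointwise on ℝ³: n×(def v)×n = sym( curl_F( v×n ) ). -/
open Matrix

noncomputable section

/-- The tangential projection matrix `Π_F = I - n nᵀ`. -/
def PF (n : V3) : M3 := 1 - Matrix.vecMulVec n n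

/-- Tangential derivative `(∇_F)_i f = Σ_k (Π_F)_{ik} ∂_k f`. -/
def dF (n : V3) (i : Fin 3) (f : V3 → ℝ) : V3 → ℝ :=
  fun x => ∑ k, PF n i k * pd k f x

/-- `(∇_F^⊥)_i f = Σ_{k,l} ε_{ikl} n_k ∂_l f`. -/
def dFperp (n : V3) (i : Fin 3) (f : V3 → ℝ) : V3 → ℝ :=
  fun x => ∑ k, ∑ l, eps i k l * n k * pd l f x

/-- `(∇_F w)_{ij} = (∇_F)_i w_j`. -/
def gradF (n : V3) (w : V3 → V3) : V3 → M3 :=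
  fun x => Matrix.of fun i j => dF n i (fun y => w y j) x

/-- First trace for the `inc` operator: `tr₁(τ) = n×τ×n`. -/
def tr1 (n : V3) (τ : V3 → M3) : V3 → M3 :=
  fun x => bCrossA n (aCrossB (τ x) n)

/-- Second trace for the `inc` operator:
`tr₂(τ) = sym( n×(∇×τ)·Π_F + ∇_F(n·τ·Π_F) )`. -/
def tr2 (n : V3) (τ : V3 → M3) : V3 → M3 :=
  fun x => symMat (bCrossA n (colCurl τ x) * PF n
    + gradF n (fun y => Matrix.vecMul (Matrix.vecMul n (τ y)) (PF n)) x)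

/-- `(curl_F w)_{ij} = (∇_F^⊥)_j w_i`. -/
def curlF (n : V3) (w : V3 → V3) : V3 → M3 :=
  fun x => Matrix.of fun i j => dFperp n j (fun y => w y i) x


lemma pd_lincomb (c : Fin 3 → ℝ) (f : Fin 3 → V3 → ℝ) (x : V3)
    (hf : ∀ p, DifferentiableAt ℝ (f p) x) (l : Fin 3) :
    pd l (fun y => ∑ p, c p * f p y) x = ∑ p, c p * pd l (f p) x := by
  unfold pd
  rw [fderiv_fun_sum (fun p _ => (hf p).const_mul (c p))]
  rw [ContinuousLinearMap.sum_apply]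
  refine Finset.sum_congr rfl fun p _ => ?_
  rw [fderiv_const_mul (hf p) (c p)]
  rfl

/-- `n×(def v)×n = sym(curl_F(v×n))`. -/
theorem stmt_13 (n : V3) (hn : ∑ i, n i * n i = 1)
    (v : V3 → V3) (hv : ContDiff ℝ 2 v) :
    ∀ x, bCrossA n (aCrossB (defv v x) n)
      = symMat (curlF n (fun y => vcross (v y) n) x) := by
  intro x
  have hd : ∀ p, DifferentiableAt ℝ (fun y => v y p) x := fun p =>
    ((differentiable_pi.mp (hv.differentiable (by norm_num))) p).differentiableAt
  have key : ∀ i l, pd l (fun y => vcross (v y) n i) x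
      = ∑ p, (∑ q, eps i p q * n q) * pd l (fun y => v y p) x := by
    intro i l
    have h1 : (fun y => vcross (v y) n i)
        = fun y => ∑ p, (∑ q, eps i p q * n q) * v y p := by
      funext y
      unfold vcross
      refine Finset.sum_congr rfl fun p _ => ?_
      rw [Finset.sum_mul]
      exact Finset.sum_congr rfl fun q _ => by ring
    rw [h1, pd_lincomb _ _ _ hd]
  ext i j
  simp only [bCrossA, aCrossB, defv, symMat, gradv, curlF, dFperp, Matrix.of_apply,
    Matrix.smul_apply, Matrix.add_apply, Matrix.transpose_apply, smul_eq_mul, key]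
  fin_cases i <;> fin_cases j <;>
    simp only [Fin.sum_univ_three, Fin.isValue] <;>
    norm_num [eps] <;> ring
end
end

section
/- Let n ∈ ℝ³ be a unit vector. For every twice continuously differentiable vector field v : ℝ³ → ℝ³, one has pointwise on ℝ³: tr₂(def v) = ∇_F²(v·n), where v·n is the scalar field Σ_i v_i n_i. -/
open Matrix

noncomputable section

/-- The tangential Hessian `(∇_F² f)_{ij} = (∇_F)_i (∇_F)_j f`. -/
def hessF (n : V3) (f : V3 → ℝ) : V3 → M3 :=
  fun x => Matrix.of fun i j => dF n i (dF n j f) x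

lemma pd_comm' (f : V3 → ℝ) (hf : ContDiff ℝ 2 f) (a b : Fin 3) (x : V3) :
    pd a (pd b f) x = pd b (pd a f) x := by
  have hdf : ContDiff ℝ 1 (fderiv ℝ f) := hf.fderiv_right (by norm_num)
  have key : ∀ c d : Fin 3, pd c (pd d f) x
      = fderiv ℝ (fderiv ℝ f) x (Pi.single c 1) (Pi.single d 1) := by
    intro c d
    show fderiv ℝ (fun y => fderiv ℝ f y (Pi.single d 1)) x (Pi.single c 1) = _
    rw [fderiv_clm_apply (hdf.differentiable (by norm_num) x) (differentiableAt_const _)]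
    simp
  rw [key, key]
  exact (hf.contDiffAt.isSymmSndFDerivAt (by norm_num)) _ _

lemma pd_form2 (x : V3) (k : Fin 3) (C : Fin 3 → Fin 3 → ℝ) (F : Fin 3 → Fin 3 → V3 → ℝ)
    (hF : ∀ a b, Differentiable ℝ (F a b)) (f : V3 → ℝ)
    (hf : ∀ y, f y = ∑ a, ∑ b, C a b * F a b y) :
    pd k f x = ∑ a, ∑ b, C a b * pd k (F a b) x := by
  have hfe : f = fun y => ∑ a, ∑ b, C a b * F a b y := funext hf
  show fderiv ℝ f x (Pi.single k 1) = _
  rw [hfe]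
  rw [fderiv_fun_sum (fun a _ =>
    DifferentiableAt.fun_sum fun b _ => ((hF a b) x).const_mul _)]
  rw [ContinuousLinearMap.sum_apply]
  refine Finset.sum_congr rfl fun a _ => ?_
  rw [fderiv_fun_sum (fun b _ => ((hF a b) x).const_mul _), ContinuousLinearMap.sum_apply]
  refine Finset.sum_congr rfl fun b _ => ?_
  rw [fderiv_const_mul ((hF a b) x)]
  rfl

lemma pd_form1 (x : V3) (k : Fin 3) (c : Fin 3 → ℝ) (F : Fin 3 → V3 → ℝ)
    (hF : ∀ b, Differentiable ℝ (F b)) (f : V3 → ℝ)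
    (hf : ∀ y, f y = ∑ b, c b * F b y) :
    pd k f x = ∑ b, c b * pd k (F b) x := by
  have hfe : f = fun y => ∑ b, c b * F b y := funext hf
  show fderiv ℝ f x (Pi.single k 1) = _
  rw [hfe, fderiv_fun_sum (fun b _ => ((hF b) x).const_mul _), ContinuousLinearMap.sum_apply]
  refine Finset.sum_congr rfl fun b _ => ?_
  rw [fderiv_const_mul ((hF b) x)]
  rfl

lemma pd_two (x : V3) (k : Fin 3) (c1 c2 : ℝ) (F1 F2 : V3 → ℝ)
    (h1 : Differentiable ℝ F1) (h2 : Differentiable ℝ F2) (f : V3 → ℝ)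
    (hf : ∀ y, f y = c1 * F1 y + c2 * F2 y) :
    pd k f x = c1 * pd k F1 x + c2 * pd k F2 x := by
  have hfe : f = fun y => c1 * F1 y + c2 * F2 y := funext hf
  show fderiv ℝ f x (Pi.single k 1) = _
  rw [hfe, fderiv_fun_add ((h1 x).const_mul _) ((h2 x).const_mul _),
    fderiv_const_mul (h1 x), fderiv_const_mul (h2 x)]
  rfl

set_option maxHeartbeats 2000000 in
lemma key (n : V3) (S : Fin 3 → Fin 3 → Fin 3 → ℝ) (hS : ∀ a b m, S b a m = S a b m)
    (i j : Fin 3) :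
    (2:ℝ)⁻¹ • (
      (∑ c, (∑ p, ∑ q, eps i p q * n p * ∑ s, ∑ t, eps q s t *
          (2⁻¹ * S s t c + 2⁻¹ * S s c t)) * PF n c j
      + ∑ k, PF n i k * ∑ a, ∑ b, 2⁻¹ * (n a * PF n b j + n b * PF n a j) * S k a b
      + (∑ c, (∑ p, ∑ q, eps j p q * n p * ∑ s, ∑ t, eps q s t *
          (2⁻¹ * S s t c + 2⁻¹ * S s c t)) * PF n c i
        + ∑ k, PF n j k * ∑ a, ∑ b, 2⁻¹ * (n a * PF n b i + n b * PF n a i) * S k a b)))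
    = ∑ k, PF n i k * ∑ a, ∑ b, PF n j a * n b * S k a b := by
  have e1 : ∀ m, S 1 0 m = S 0 1 m := fun m => hS 0 1 m
  have e2 : ∀ m, S 2 0 m = S 0 2 m := fun m => hS 0 2 m
  have e3 : ∀ m, S 2 1 m = S 1 2 m := fun m => hS 1 2 m
  have hPF : ∀ a b : Fin 3, PF n a b = (if a = b then (1:ℝ) else 0) - n a * n b := by
    intro a b
    simp [PF, Matrix.one_apply, Matrix.sub_apply, Matrix.vecMulVec_apply]
  have heps : ∀ a b c : Fin 3, eps a b c =
      ((((b : ℤ) - (a : ℤ)) * ((c : ℤ) - (b : ℤ)) * ((c : ℤ) - (a : ℤ)) : ℤ) : ℝ) / 2 :=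
    fun a b c => rfl
  have tri : ∀ k : Fin 3, k = 0 ∨ k = 1 ∨ k = 2 := by decide
  rcases tri i with rfl | rfl | rfl <;> rcases tri j with rfl | rfl | rfl <;>
  · simp only [Fin.sum_univ_three, hPF, heps, smul_eq_mul, e1, e2, e3, Fin.isValue,
      Fin.reduceEq, reduceIte, if_true, if_false]
    norm_num
    ring

/-- `tr₂(def v) = ∇_F²(v·n)`. -/
theorem stmt_14 (n : V3) (hn : ∑ i, n i * n i = 1)
    (v : V3 → V3) (hv : ContDiff ℝ 2 v) :
    ∀ x, tr2 n (defv v) x = hessF n (fun y => ∑ i, v y i * n i) x := by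
  intro x
  have hg : ∀ m, ContDiff ℝ 2 (fun y => v y m) := fun m => (contDiff_pi.mp hv) m
  have hdg : ∀ m, Differentiable ℝ (fun y => v y m) :=
    fun m => (hg m).differentiable (by norm_num)
  have hdpd : ∀ l m, Differentiable ℝ (pd l (fun y => v y m)) := by
    intro l m
    have h1 : ContDiff ℝ 1 (fun y => fderiv ℝ (fun z => v z m) y (Pi.single l 1)) :=
      ((hg m).fderiv_right (by norm_num)).clm_apply contDiff_const
    exact h1.differentiable (by norm_num)
  have h1 : ∀ s t c : Fin 3, pd s (fun y => defv v y t c) x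
      = 2⁻¹ * pd s (pd t (fun y => v y c)) x + 2⁻¹ * pd s (pd c (fun y => v y t)) x := by
    intro s t c
    refine pd_two x s 2⁻¹ 2⁻¹ _ _ (hdpd t c) (hdpd c t) _ (fun y => ?_)
    simp [defv, symMat, gradv, Matrix.smul_apply, Matrix.add_apply,
      Matrix.transpose_apply, Matrix.of_apply, smul_eq_mul]
    ring
  have h2 : ∀ k c : Fin 3, pd k (fun y => (n ᵥ* defv v y ᵥ* PF n) c) x
      = ∑ a, ∑ b, (2⁻¹ * (n a * PF n b c + n b * PF n a c))
          * pd k (pd a (fun y => v y b)) x := by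
    intro k c
    refine pd_form2 x k _ (fun a b => pd a (fun y => v y b))
      (fun a b => hdpd a b) _ (fun y => ?_)
    simp only [Matrix.vecMul, dotProduct, defv, symMat, gradv,
      Matrix.smul_apply, Matrix.add_apply, Matrix.transpose_apply, Matrix.of_apply,
      Fin.sum_univ_three, smul_eq_mul]
    ring
  have h3 : ∀ k jj : Fin 3, pd k (dF n jj fun y => ∑ i, v y i * n i) x
      = ∑ a, ∑ b, (PF n jj a * n b) * pd k (pd a (fun y => v y b)) x := by
    intro k jj
    refine pd_form2 x k _ (fun a b => pd a (fun y => v y b))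
      (fun a b => hdpd a b) _ (fun y => ?_)
    have hin : ∀ l : Fin 3, ∀ z : V3, pd l (fun w => ∑ i, v w i * n i) z
        = ∑ b, n b * pd l (fun w => v w b) z := by
      intro l z
      refine pd_form1 z l n (fun b => fun w => v w b) hdg _ (fun w => ?_)
      exact Finset.sum_congr rfl fun b _ => (mul_comm _ _)
    simp only [dF]
    simp only [hin]
    simp only [Fin.sum_univ_three]
    ring
  ext i j
  simp only [tr2, symMat, hessF, gradF, dF, colCurl, bCrossA, Matrix.smul_apply,
    Matrix.add_apply, Matrix.transpose_apply, Matrix.mul_apply, Matrix.of_apply]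
  simp only [h1, h2, h3]
  exact key n (fun a b m => pd a (pd b fun y => v y m) x)
    (fun a b m => pd_comm' _ (hg m) b a x) i j
end
end

section
/- Let n ∈ ℝ³ be a unit vector. For every three-times continuously differentiable symmetric matrix field τ : ℝ³ → 𝕊, one has pointwise on ℝ³: n·(inc τ)·n = div_F div_F( n×τ×n ), where n·A·n := Σ_{i,j} n_i A_{ij} n_j. -/
open Matrix

noncomputable section

lemma contDiff_pd {f : V3 → ℝ} (h : ContDiff ℝ 3 f) (a : Fin 3) : ContDiff ℝ 2 (pd a f) := by
  have h' : ContDiff ℝ 2 (fderiv ℝ f) := h.fderiv_right (by norm_num)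
  exact h'.clm_apply contDiff_const

lemma pd_addL (f g : V3 → ℝ) (k : Fin 3) (x : V3) (hf : Differentiable ℝ f)
    (hg : Differentiable ℝ g) :
    pd k (fun y => f y + g y) x = pd k f x + pd k g x := by
  simp [pd, fderiv_fun_add (hf x) (hg x)]

lemma pd_subL (f g : V3 → ℝ) (k : Fin 3) (x : V3) (hf : Differentiable ℝ f)
    (hg : Differentiable ℝ g) :
    pd k (fun y => f y - g y) x = pd k f x - pd k g x := by
  simp [pd, fderiv_fun_sub (hf x) (hg x)]

lemma pd_negL (f : V3 → ℝ) (k : Fin 3) (x : V3) :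
    pd k (fun y => -f y) x = -pd k f x := by
  simp [pd, fderiv_neg]

lemma pd_const_mulL (f : V3 → ℝ) (c : ℝ) (k : Fin 3) (x : V3) (hf : Differentiable ℝ f) :
    pd k (fun y => c * f y) x = c * pd k f x := by
  simp [pd, fderiv_const_mul (hf x) c]

lemma pd_mul_constL (f : V3 → ℝ) (c : ℝ) (k : Fin 3) (x : V3) (hf : Differentiable ℝ f) :
    pd k (fun y => f y * c) x = pd k f x * c := by
  simp only [pd, fderiv_mul_const (hf x) c, ContinuousLinearMap.coe_smul', Pi.smul_apply, smul_eq_mul]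
  ring

lemma dF_eq (n : V3) (i : Fin 3) (f : V3 → ℝ) :
    dF n i f = fun x => ∑ k, PF n i k * pd k f x := rfl

set_option maxHeartbeats 4000000 in
/-- `n·(inc τ)·n = div_F div_F (n×τ×n)`. -/
theorem stmt_15 (n : V3) (hn : ∑ i, n i * n i = 1)
    (τ : V3 → M3) (hτsym : ∀ x, (τ x)ᵀ = τ x)
    (hτ : ∀ i j, ContDiff ℝ 3 fun x => τ x i j) :
    ∀ x, n ⬝ᵥ (incOp τ x).mulVec n
      = ∑ i, ∑ j, dF n i (dF n j fun y => tr1 n τ y i j) x := by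
  have hd : ∀ i j : Fin 3, Differentiable ℝ (fun y => τ y i j) :=
    fun i j => (hτ i j).differentiable (by norm_num)
  have hd1 : ∀ (a : Fin 3) (i j : Fin 3), Differentiable ℝ (pd a (fun y => τ y i j)) :=
    fun a i j => (contDiff_pd (hτ i j) a).differentiable (by norm_num)
  intro x
  simp only [incOp, colCurl, rowCurl, Matrix.of_apply, dotProduct, mulVec, dF_eq, PF, tr1,
    bCrossA, aCrossB, Matrix.sub_apply, Matrix.one_apply, Matrix.vecMulVec_apply, Fin.reduceEq, reduceIte,
    Fin.sum_univ_three]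
  norm_num (config := { maxSteps := 1000000 }) [eps]
  simp (config := { maxSteps := 1000000 }) (disch := fun_prop (disch := skip)) only
    [pd_addL, pd_subL, pd_negL, pd_const_mulL, pd_mul_constL]
  obtain ⟨D, hD⟩ : ∃ D : Fin 3 → Fin 3 → Fin 3 → Fin 3 → ℝ,
      ∀ a b c d : Fin 3, pd a (pd b (fun y => τ y c d)) x = D a b c d :=
    ⟨_, fun _ _ _ _ => rfl⟩
  simp only [hD]
  ring
end
end
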